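/- arXiv:1612.06103 — 2 statements merged into one kernel-verified Lean document; each statement's English description precedes it below -/
import Mathlib

section
/- Let n_1, n_2 be nonnegative integers, λ1 a special symplectic partition of 2n_1, λ2 a special orthogonal partition of 2n_2, and let l denote the number of nonzero terms of ind(λ1,λ2) = λ1 + λ2 + ξ. Then for every k ≥ 1 one has S_k(ζ(λ1)) + S_k(ζ(λ2)) ≥ S_k(ξ), and moreover S_k(ζ(λ1)) + S_k(ζ(λ2)) ≥ S_k(ξ) + 1 whenever k > l. (These are the inequalities (1) and (2) established in the proof of Proposition 1.9; they are equivalent to λ1 + ζ(λ1) + λ2 + ζ(λ2) ≥ (λ1 + λ2 + ξ) ∪ (1).) -/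
open Classical

namespace Wald

/-- `S f k = λ_1 + … + λ_k` (partitions are indexed from 1; index 0 is unused). -/
def S (f : ℕ → ℕ) (k : ℕ) : ℕ := ∑ j ∈ Finset.Icc 1 k, f j

/-- `f` represents a partition of `N`: nonincreasing on indices `≥ 1`,
finitely many nonzero terms, with total sum `N`. -/
structure IsPartition (f : ℕ → ℕ) (N : ℕ) : Prop where
  mono : ∀ ⦃j k : ℕ⦄, 1 ≤ j → j ≤ k → f k ≤ f j
  fin : ∃ m, ∀ j, m < j → f j = 0
  total : ∀ m, (∀ j, m < j → f j = 0) → S f m = N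

/-- multiplicity of `i` as a term of the partition -/
noncomputable def mult (f : ℕ → ℕ) (i : ℕ) : ℕ := Set.ncard {j : ℕ | 1 ≤ j ∧ f j = i}

/-- dominance order: `Dom f g ↔ f ≤ g` -/
def Dom (f g : ℕ → ℕ) : Prop := ∀ k, S f k ≤ S g k

/-- transposed partition: `(transpose f) j = #{i ≥ 1 : f i ≥ j}` for `j ≥ 1` -/
noncomputable def transpose (f : ℕ → ℕ) : ℕ → ℕ :=
  fun j => Set.ncard {i : ℕ | 1 ≤ i ∧ 1 ≤ j ∧ j ≤ f i}

/-- union of two partitions (all terms listed together in nonincreasing order);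
it is characterized by `transpose (unionP f g) = transpose f + transpose g`. -/
noncomputable def unionP (f g : ℕ → ℕ) : ℕ → ℕ :=
  transpose (fun j => transpose f j + transpose g j)

/-- the partition `(1)` -/
def one1 : ℕ → ℕ := fun j => if j = 1 then 1 else 0

/-- symplectic partition: every odd `i ≥ 1` has even multiplicity -/
def Symp (f : ℕ → ℕ) : Prop := ∀ i, Odd i → Even (mult f i)

/-- orthogonal partition: every even `i ≥ 2` has even multiplicity -/
def Orth (f : ℕ → ℕ) : Prop := ∀ i, Even i → 1 ≤ i → Even (mult f i)

/-- `λ_{2j-1} ≡ λ_{2j} (mod 2)` for all `j ≥ 1` (speciality for symplectic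
partitions of `2n` and orthogonal partitions of `2n`). -/
def SpecialPairs (f : ℕ → ℕ) : Prop := ∀ j, 1 ≤ j → f (2*j - 1) % 2 = f (2*j) % 2

/-- speciality for orthogonal partitions of `2n+1`: `λ_1` odd and
`λ_{2j} ≡ λ_{2j+1} (mod 2)` for all `j ≥ 1`. -/
def SpecialOrthOdd (f : ℕ → ℕ) : Prop :=
  Odd (f 1) ∧ ∀ j, 1 ≤ j → f (2*j) % 2 = f (2*j + 1) % 2

/-- `Jord_bp` for symplectic partitions: even `i ≥ 2` with positive multiplicity -/
def JordbpS (f : ℕ → ℕ) : Set ℕ := {i | Even i ∧ 2 ≤ i ∧ 1 ≤ mult f i}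

/-- `Jord_bp` for orthogonal partitions: odd `i ≥ 1` with positive multiplicity -/
def JordbpO (f : ℕ → ℕ) : Set ℕ := {i | Odd i ∧ 1 ≤ mult f i}

/-- the set `{i_1 > … > i_m}` of terms with odd multiplicity -/
def OddSet (f : ℕ → ℕ) : Set ℕ := {i | Odd (mult f i)}

/-- for special symplectic partitions: `{i_1 > … > i_{m'}}`, with `0` added if `m` is odd -/
def Dsymp (f : ℕ → ℕ) : Set ℕ :=
  {i | Odd (mult f i) ∨ (i = 0 ∧ Odd (OddSet f).ncard)}

/-- `a = i_{2h-1}` and `b = i_{2h}` for some `h`: consecutive elements of `Dsymp f`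
with an even number of elements of `Dsymp f` above `a`. -/
def PairedS (f : ℕ → ℕ) (a b : ℕ) : Prop :=
  b < a ∧ a ∈ Dsymp f ∧ b ∈ Dsymp f ∧ Even ((Dsymp f ∩ Set.Ioi a).ncard) ∧
    Dsymp f ∩ Set.Ioo b a = ∅

/-- intervals of a special symplectic partition of `2n` -/
def IsIntervalS (f : ℕ → ℕ) (Δ : Set ℕ) : Prop :=
  (∃ a b, PairedS f a b ∧ Δ = {i | (i = 0 ∨ 1 ≤ mult f i) ∧ b ≤ i ∧ i ≤ a}) ∨
  (∃ i, Even i ∧ (i = 0 ∨ (2 ≤ i ∧ 1 ≤ mult f i)) ∧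
    (¬ ∃ a b, PairedS f a b ∧ b ≤ i ∧ i ≤ a) ∧ Δ = {i})

/-- `a = i_{2h-1}` and `b = i_{2h}` for some `h` (orthogonal partitions of `2n`) -/
def PairedOE (f : ℕ → ℕ) (a b : ℕ) : Prop :=
  b < a ∧ a ∈ OddSet f ∧ b ∈ OddSet f ∧ Even ((OddSet f ∩ Set.Ioi a).ncard) ∧
    OddSet f ∩ Set.Ioo b a = ∅

/-- intervals of a special orthogonal partition of `2n` -/
def IsIntervalOE (f : ℕ → ℕ) (Δ : Set ℕ) : Prop :=
  (∃ a b, PairedOE f a b ∧ Δ = {i | 1 ≤ mult f i ∧ b ≤ i ∧ i ≤ a}) ∨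
  (∃ i, Odd i ∧ 1 ≤ mult f i ∧ (¬ ∃ a b, PairedOE f a b ∧ b ≤ i ∧ i ≤ a) ∧ Δ = {i})

/-- `a = i_{2h}` and `b = i_{2h+1}` for some `h ≥ 1` (orthogonal partitions of `2n+1`) -/
def PairedOO (f : ℕ → ℕ) (a b : ℕ) : Prop :=
  b < a ∧ a ∈ OddSet f ∧ b ∈ OddSet f ∧ Odd ((OddSet f ∩ Set.Ioi a).ncard) ∧
    OddSet f ∩ Set.Ioo b a = ∅

/-- intervals of a special orthogonal partition of `2n+1` (convention `i_0 = ∞`) -/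
def IsIntervalOO (f : ℕ → ℕ) (Δ : Set ℕ) : Prop :=
  (∃ b, b ∈ OddSet f ∧ OddSet f ∩ Set.Ioi b = ∅ ∧ Δ = {i | 1 ≤ mult f i ∧ b ≤ i}) ∨
  (∃ a b, PairedOO f a b ∧ Δ = {i | 1 ≤ mult f i ∧ b ≤ i ∧ i ≤ a}) ∨
  (∃ i, Odd i ∧ 1 ≤ mult f i ∧
    (¬ ((∃ b, b ∈ OddSet f ∧ OddSet f ∩ Set.Ioi b = ∅ ∧ b ≤ i) ∨
        (∃ a b, PairedOO f a b ∧ b ≤ i ∧ i ≤ a))) ∧ Δ = {i})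

/-- `J(Δ) = {j ≥ 1 : λ_j ∈ Δ}` -/
def Jset (f : ℕ → ℕ) (Δ : Set ℕ) : Set ℕ := {j | 1 ≤ j ∧ f j ∈ Δ}

/-- `ζ(λ)` for a special symplectic partition (`j_max(Δ_min) = ∞`, so the smallest
interval contributes no `-1`: its `J`-set has no greatest element). -/
noncomputable def zetaS (f : ℕ → ℕ) : ℕ → ℤ := fun j =>
  if ∃ Δ, IsIntervalS f Δ ∧ IsLeast (Jset f Δ) j then 1
  else if ∃ Δ, IsIntervalS f Δ ∧ IsGreatest (Jset f Δ) j then -1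
  else 0

/-- `ζ(λ)` for a special orthogonal partition of `2n` -/
noncomputable def zetaOE (f : ℕ → ℕ) : ℕ → ℤ := fun j =>
  if ∃ Δ, IsIntervalOE f Δ ∧ IsLeast (Jset f Δ) j then 1
  else if ∃ Δ, IsIntervalOE f Δ ∧ IsGreatest (Jset f Δ) j then -1
  else 0

/-- `J^+` for `λ1` special symplectic and `λ2` special orthogonal (of `2n2`) -/
def JplusSet (f1 f2 : ℕ → ℕ) : Set ℕ :=
  {j | 1 ≤ j ∧ Even (f1 j) ∧ Odd (f2 j) ∧
    ((∃ Δ, IsIntervalS f1 Δ ∧ IsLeast (Jset f1 Δ) j) ∨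
     (∃ Δ, IsIntervalOE f2 Δ ∧ IsLeast (Jset f2 Δ) j))}

/-- `J^-` -/
def JminusSet (f1 f2 : ℕ → ℕ) : Set ℕ :=
  {j | 1 ≤ j ∧ Even (f1 j) ∧ Odd (f2 j) ∧
    ((∃ Δ, IsIntervalS f1 Δ ∧ IsGreatest (Jset f1 Δ) j) ∨
     (∃ Δ, IsIntervalOE f2 Δ ∧ IsGreatest (Jset f2 Δ) j))}

/-- the sequence `ξ` -/
noncomputable def xi (f1 f2 : ℕ → ℕ) : ℕ → ℤ := fun j =>
  if j ∈ JplusSet f1 f2 then 1 else if j ∈ JminusSet f1 f2 then -1 else 0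

/-- partial sums of an integer-valued sequence indexed from 1 -/
def Sz (f : ℕ → ℤ) (k : ℕ) : ℤ := ∑ j ∈ Finset.Icc 1 k, f j

/-- `g` is the greatest orthogonal partition of `N` which is dominated by the
sequence `t` (used to define the Spaltenstein-type duality `d`). -/
def IsDualOf (g : ℕ → ℕ) (N : ℕ) (t : ℕ → ℕ) : Prop :=
  (IsPartition g N ∧ Orth g ∧ Dom g t) ∧
  ∀ ν, IsPartition ν N → Orth ν → Dom ν t → Dom ν g

/-- `g = d(f)` for `f` a symplectic partition of `2m`: the greatest orthogonal
partition of `2m+1` dominated by `^t(f ∪ (1))`. -/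
def IsSympDual (g : ℕ → ℕ) (m : ℕ) (f : ℕ → ℕ) : Prop :=
  IsDualOf g (2*m+1) (transpose (unionP f one1))

/-- `g = d(f)` for `f` an orthogonal partition of `2m`: the greatest orthogonal
partition of `2m` dominated by `^tf`. -/
def IsOrthDual (g : ℕ → ℕ) (m : ℕ) (f : ℕ → ℕ) : Prop :=
  IsDualOf g (2*m) (transpose f)


/-! ### Auxiliary counting lemmas -/

section Count

variable {f : ℕ → ℕ} {B : ℕ}

/-- number of indices `j ≥ 1` with `f j > a` -/
noncomputable def nGT (f : ℕ → ℕ) (a : ℕ) : ℕ := Set.ncard {j : ℕ | 1 ≤ j ∧ a < f j}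

lemma gt_subset (hB : ∀ j, B < j → f j = 0) (a : ℕ) :
    {j : ℕ | 1 ≤ j ∧ a < f j} ⊆ Set.Icc 1 B := by
  intro j hj
  simp only [Set.mem_setOf_eq] at hj
  obtain ⟨hj1, hj2⟩ := hj
  refine ⟨hj1, ?_⟩
  by_contra hc
  push_neg at hc
  have h0 := hB j hc
  omega

lemma gt_fin (hB : ∀ j, B < j → f j = 0) (a : ℕ) : {j : ℕ | 1 ≤ j ∧ a < f j}.Finite :=
  Set.Finite.subset (Set.finite_Icc 1 B) (gt_subset hB a)

lemma mem_gt_iff (hm : ∀ ⦃i j : ℕ⦄, 1 ≤ i → i ≤ j → f j ≤ f i)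
    (hB : ∀ j, B < j → f j = 0) (a : ℕ) :
    ∀ j, (1 ≤ j ∧ a < f j) ↔ (1 ≤ j ∧ j ≤ nGT f a) := by
  have hfin := gt_fin hB a
  rcases Set.eq_empty_or_nonempty {j : ℕ | 1 ≤ j ∧ a < f j} with he | hne
  · intro j
    constructor
    · intro hj
      exact absurd (Set.eq_empty_iff_forall_notMem.mp he j) (by simp [Set.mem_setOf_eq, hj])
    · intro hj
      have : nGT f a = 0 := by simp [nGT, he]
      omega
  · have hne' : hfin.toFinset.Nonempty := by
      rwa [Set.Finite.toFinset_nonempty]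
    set m := hfin.toFinset.max' hne' with hm'
    have hmem : m ∈ {j : ℕ | 1 ≤ j ∧ a < f j} := by
      have := hfin.toFinset.max'_mem hne'
      rwa [Set.Finite.mem_toFinset] at this
    have hseq : {j : ℕ | 1 ≤ j ∧ a < f j} = Set.Icc 1 m := by
      ext j
      simp only [Set.mem_setOf_eq, Set.mem_Icc]
      constructor
      · intro hj
        exact ⟨hj.1, hfin.toFinset.le_max' j (by rwa [Set.Finite.mem_toFinset])⟩
      · intro hj
        exact ⟨hj.1, lt_of_lt_of_le hmem.2 (hm hj.1 hj.2)⟩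
    have hcard : nGT f a = m := by
      rw [nGT, hseq, ← Finset.coe_Icc, Set.ncard_coe_finset, Nat.card_Icc]
      omega
    intro j
    rw [hcard]
    constructor
    · intro hj
      have : j ∈ Set.Icc 1 m := hseq ▸ (by simp [Set.mem_setOf_eq, hj])
      simpa using this
    · intro hj
      have : j ∈ {j : ℕ | 1 ≤ j ∧ a < f j} := by
        rw [hseq]; simp [Set.mem_Icc]; omega
      simpa using this

lemma mult_fin (hB : ∀ j, B < j → f j = 0) {v : ℕ} (hv : 1 ≤ v) :
    {j : ℕ | 1 ≤ j ∧ f j = v}.Finite := by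
  apply Set.Finite.subset (Set.finite_Icc 1 B)
  intro j hj
  simp only [Set.mem_setOf_eq] at hj
  refine ⟨hj.1, ?_⟩
  by_contra hc
  push_neg at hc
  have h0 := hB j hc
  have h2 := hj.2
  omega

lemma mult_zero (hB : ∀ j, B < j → f j = 0) : mult f 0 = 0 := by
  have hsub : Set.Ioi B ⊆ {j : ℕ | 1 ≤ j ∧ f j = 0} := by
    intro j hj
    simp only [Set.mem_Ioi] at hj
    exact ⟨by omega, hB j hj⟩
  have : {j : ℕ | 1 ≤ j ∧ f j = 0}.Infinite :=
    Set.Infinite.mono hsub (Set.Ioi_infinite B)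
  simp [mult, this.ncard]

lemma mult_pos_iff (hB : ∀ j, B < j → f j = 0) {v : ℕ} (hv : 1 ≤ v) :
    1 ≤ mult f v ↔ ∃ j, 1 ≤ j ∧ f j = v := by
  rw [mult]
  constructor
  · intro h
    obtain ⟨j, hj⟩ := (Set.ncard_pos (mult_fin hB hv)).mp h
    exact ⟨j, hj⟩
  · rintro ⟨j, hj⟩
    exact (Set.ncard_pos (mult_fin hB hv)).mpr ⟨j, hj⟩

lemma nGT_step (hm : ∀ ⦃i j : ℕ⦄, 1 ≤ i → i ≤ j → f j ≤ f i)
    (hB : ∀ j, B < j → f j = 0) (a : ℕ) :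
    nGT f a = nGT f (a+1) + mult f (a+1) := by
  have hun : {j : ℕ | 1 ≤ j ∧ a < f j} =
      {j : ℕ | 1 ≤ j ∧ a+1 < f j} ∪ {j : ℕ | 1 ≤ j ∧ f j = a+1} := by
    ext j
    simp only [Set.mem_setOf_eq, Set.mem_union]
    omega
  have hdisj : Disjoint {j : ℕ | 1 ≤ j ∧ a+1 < f j} {j : ℕ | 1 ≤ j ∧ f j = a+1} :=
    Set.disjoint_left.mpr (by
      intro j hj1 hj2
      simp only [Set.mem_setOf_eq] at hj1 hj2
      omega)
  rw [nGT, hun, Set.ncard_union_eq hdisj (gt_fin hB (a+1)) (mult_fin hB (by omega))]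
  rfl

lemma first_occ (hm : ∀ ⦃i j : ℕ⦄, 1 ≤ i → i ≤ j → f j ≤ f i)
    (hB : ∀ j, B < j → f j = 0) {v : ℕ} (h : ∃ j, 1 ≤ j ∧ f j = v) :
    f (nGT f v + 1) = v := by
  obtain ⟨j, hj1, hjv⟩ := h
  have h1 := mem_gt_iff hm hB v (nGT f v + 1)
  have h2 := mem_gt_iff hm hB v j
  have hle : f (nGT f v + 1) ≤ v := by
    by_contra hc
    push_neg at hc
    have := h1.mp ⟨by omega, hc⟩
    omega
  have hjnot : ¬ (j ≤ nGT f v) := by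
    intro hcon
    have := h2.mpr ⟨hj1, hcon⟩
    omega
  have : f (nGT f v + 1) ≥ f j := hm (by omega) (by omega)
  omega

lemma zero_occ (hm : ∀ ⦃i j : ℕ⦄, 1 ≤ i → i ≤ j → f j ≤ f i)
    (hB : ∀ j, B < j → f j = 0) : f (nGT f 0 + 1) = 0 := by
  have h1 := mem_gt_iff hm hB 0 (nGT f 0 + 1)
  by_contra hc
  have := h1.mp ⟨by omega, by omega⟩
  omega

end Count

section Parity

variable {f : ℕ → ℕ} {B : ℕ}

lemma OddSet_sub (hm : ∀ ⦃i j : ℕ⦄, 1 ≤ i → i ≤ j → f j ≤ f i)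
    (hB : ∀ j, B < j → f j = 0) :
    ∀ v ∈ OddSet f, 1 ≤ v ∧ 1 ≤ mult f v ∧ v ≤ f 1 := by
  intro v hv
  have hodd : Odd (mult f v) := hv
  have hpos : 1 ≤ mult f v := by
    rcases Nat.eq_zero_or_pos (mult f v) with h | h
    · rw [h] at hodd; exact absurd hodd (by simp)
    · exact h
  have hv1 : 1 ≤ v := by
    by_contra hc
    push_neg at hc
    interval_cases v
    · rw [mult_zero hB] at hpos; omega
  obtain ⟨j, hj1, hjv⟩ := (mult_pos_iff hB hv1).mp hpos
  exact ⟨hv1, hpos, hjv ▸ hm (le_refl 1) hj1⟩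

lemma OddSet_fin (hm : ∀ ⦃i j : ℕ⦄, 1 ≤ i → i ≤ j → f j ≤ f i)
    (hB : ∀ j, B < j → f j = 0) : (OddSet f).Finite := by
  apply Set.Finite.subset (Set.finite_Icc 1 (f 1))
  intro v hv
  have := OddSet_sub hm hB v hv
  exact ⟨this.1, this.2.2⟩

lemma parityN (hm : ∀ ⦃i j : ℕ⦄, 1 ≤ i → i ≤ j → f j ≤ f i)
    (hB : ∀ j, B < j → f j = 0) (a : ℕ) :
    nGT f a % 2 = ((OddSet f ∩ Set.Ioi a).ncard) % 2 := by
  have key : ∀ n a, f 1 ≤ a + n → nGT f a % 2 = ((OddSet f ∩ Set.Ioi a).ncard) % 2 := by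
    intro n
    induction n with
    | zero =>
      intro a ha
      have h1 : nGT f a = 0 := by
        rw [nGT, Set.ncard_eq_zero (gt_fin hB a)]
        ext j
        simp only [Set.mem_setOf_eq, Set.mem_empty_iff_false, iff_false]
        rintro ⟨hj1, hj2⟩
        have := hm (le_refl 1) hj1
        omega
      have h2 : OddSet f ∩ Set.Ioi a = ∅ := by
        ext v
        simp only [Set.mem_inter_iff, Set.mem_Ioi, Set.mem_empty_iff_false, iff_false]
        rintro ⟨hv1, hv2⟩
        have := (OddSet_sub hm hB v hv1).2.2
        omega
      rw [h1, h2]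
      simp
    | succ n ih =>
      intro a ha
      by_cases hcase : f 1 ≤ a + n
      · exact ih a hcase
      · push_neg at hcase
        have hstep := nGT_step hm hB a
        have hih := ih (a+1) (by omega)
        have hsplit : OddSet f ∩ Set.Ioi a =
            (OddSet f ∩ Set.Ioi (a+1)) ∪ (OddSet f ∩ {a+1}) := by
          ext v
          simp only [Set.mem_inter_iff, Set.mem_Ioi, Set.mem_union, Set.mem_singleton_iff]
          constructor
          · rintro ⟨h1, h2⟩
            rcases Nat.lt_or_ge (a+1) v with h | h
            · exact Or.inl ⟨h1, h⟩
            · exact Or.inr ⟨h1, by omega⟩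
          · rintro (⟨h1, h2⟩ | ⟨h1, h2⟩)
            · exact ⟨h1, by omega⟩
            · exact ⟨h1, by omega⟩
        have hdisj : Disjoint (OddSet f ∩ Set.Ioi (a+1)) (OddSet f ∩ {a+1}) :=
          Set.disjoint_left.mpr (by
            rintro v ⟨_, h2⟩ ⟨_, h4⟩
            simp only [Set.mem_Ioi] at h2
            simp only [Set.mem_singleton_iff] at h4
            omega)
        have hfin1 : (OddSet f ∩ Set.Ioi (a+1)).Finite :=
          Set.Finite.subset (OddSet_fin hm hB) Set.inter_subset_left
        have hfin2 : (OddSet f ∩ {a+1}).Finite :=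
          Set.Finite.subset (OddSet_fin hm hB) Set.inter_subset_left
        have hcard := Set.ncard_union_eq hdisj hfin1 hfin2
        rw [hsplit, hcard]
        have hmultpar : mult f (a+1) % 2 = (OddSet f ∩ {a+1}).ncard % 2 := by
          by_cases hmem : (a+1) ∈ OddSet f
          · have : OddSet f ∩ {a+1} = {a+1} := by
              ext v
              simp only [Set.mem_inter_iff, Set.mem_singleton_iff]
              exact ⟨fun h => h.2, fun h => ⟨h ▸ hmem, h⟩⟩
            rw [this, Set.ncard_singleton]
            have hodd : Odd (mult f (a+1)) := hmem
            rw [Nat.odd_iff] at hodd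
            omega
          · have : OddSet f ∩ {a+1} = ∅ := by
              ext v
              simp only [Set.mem_inter_iff, Set.mem_singleton_iff,
                Set.mem_empty_iff_false, iff_false]
              rintro ⟨h1, h2⟩
              exact hmem (h2 ▸ h1)
            rw [this, Set.ncard_empty]
            have hev : ¬ Odd (mult f (a+1)) := hmem
            rw [Nat.not_odd_iff_even, Nat.even_iff] at hev
            omega
        omega
  exact key (f 1) a (by omega)

end Parity

section MaxMin

lemma set_exists_max {S : Set ℕ} (hf : S.Finite) (hne : S.Nonempty) :
    ∃ m ∈ S, ∀ x ∈ S, x ≤ m := by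
  have hne' : hf.toFinset.Nonempty := by rwa [Set.Finite.toFinset_nonempty]
  refine ⟨hf.toFinset.max' hne', ?_, ?_⟩
  · have := hf.toFinset.max'_mem hne'
    rwa [Set.Finite.mem_toFinset] at this
  · intro x hx
    exact hf.toFinset.le_max' x (by rwa [Set.Finite.mem_toFinset])

lemma set_exists_min {S : Set ℕ} (hf : S.Finite) (hne : S.Nonempty) :
    ∃ m ∈ S, ∀ x ∈ S, m ≤ x := by
  have hne' : hf.toFinset.Nonempty := by rwa [Set.Finite.toFinset_nonempty]
  refine ⟨hf.toFinset.min' hne', ?_, ?_⟩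
  · have := hf.toFinset.min'_mem hne'
    rwa [Set.Finite.mem_toFinset] at this
  · intro x hx
    exact hf.toFinset.min'_le x (by rwa [Set.Finite.mem_toFinset])

end MaxMin

section NoBad

variable {f : ℕ → ℕ} {B : ℕ}

/-- In a special partition, inside a "paired range" `[b,a]` there are no parts of
the parity opposite to `a`. -/
lemma noBad (hm : ∀ ⦃i j : ℕ⦄, 1 ≤ i → i ≤ j → f j ≤ f i)
    (hB : ∀ j, B < j → f j = 0) (hsp : SpecialPairs f) {a b : ℕ} (hba : b < a)
    (haO : a ∈ OddSet f) (hEv : Even ((OddSet f ∩ Set.Ioi a).ncard))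
    (hIoo : OddSet f ∩ Set.Ioo b a = ∅) :
    ∀ w, b ≤ w → w ≤ a → w % 2 ≠ a % 2 → mult f w = 0 := by
  intro w hbw hwa hpar
  by_contra hc
  have hw1 : 1 ≤ mult f w := Nat.one_le_iff_ne_zero.mpr hc
  set W := {w' : ℕ | b ≤ w' ∧ w' ≤ a ∧ w' % 2 ≠ a % 2 ∧ 1 ≤ mult f w'} with hW
  have hWfin : W.Finite := by
    apply Set.Finite.subset (Set.finite_Icc b a)
    rintro x ⟨h1, h2, _, _⟩
    exact ⟨h1, h2⟩
  have hWne : W.Nonempty := ⟨w, hbw, hwa, hpar, hw1⟩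
  obtain ⟨m, hmW, hmax⟩ := set_exists_max hWfin hWne
  obtain ⟨hmb, hma, hmp, hmm⟩ := hmW
  have hm1 : 1 ≤ m := by
    by_contra hc'
    push_neg at hc'
    interval_cases m
    · rw [mult_zero hB] at hmm; omega
  have hmlta : m < a := by
    rcases Nat.lt_or_ge m a with h | h
    · exact h
    · exfalso; have : m = a := le_antisymm hma h; exact hmp (by rw [this])
  have hOfin : (OddSet f ∩ Set.Ioi a).Finite :=
    Set.Finite.subset (OddSet_fin hm hB) Set.inter_subset_left
  have hOsplit : OddSet f ∩ Set.Ioi m = insert a (OddSet f ∩ Set.Ioi a) := by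
    ext x
    simp only [Set.mem_inter_iff, Set.mem_Ioi, Set.mem_insert_iff]
    constructor
    · rintro ⟨hxO, hxm⟩
      rcases lt_trichotomy x a with h | h | h
      · exfalso
        have hxb : b < x := by omega
        have : x ∈ OddSet f ∩ Set.Ioo b a := ⟨hxO, hxb, h⟩
        rw [hIoo] at this
        exact this
      · exact Or.inl h
      · exact Or.inr ⟨hxO, h⟩
    · rintro (h | ⟨h1, h2⟩)
      · exact ⟨h ▸ haO, by omega⟩
      · exact ⟨h1, by omega⟩
  have hcardodd : ((OddSet f ∩ Set.Ioi m).ncard) % 2 = 1 := by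
    rw [hOsplit, Set.ncard_insert_of_notMem (by simp) hOfin]
    rw [Nat.even_iff] at hEv
    omega
  have hcpar : nGT f m % 2 = 1 := by
    rw [parityN hm hB m]
    exact hcardodd
  set c := nGT f m with hcdef
  have hc1 : 1 ≤ c := by omega
  have hfc1 : f (c+1) = m := first_occ hm hB ((mult_pos_iff hB hm1).mp hmm)
  have hfc : m < f c := ((mem_gt_iff hm hB m c).mpr ⟨hc1, le_refl c⟩).2
  -- speciality at the pair (c, c+1)
  have hu : ∃ u, 1 ≤ u ∧ 2*u - 1 = c ∧ 2*u = c + 1 := ⟨(c+1)/2, by omega⟩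
  obtain ⟨u, hu1, hu2, hu3⟩ := hu
  have hspu := hsp u hu1
  rw [hu2, hu3, hfc1] at hspu
  -- hspu : f c % 2 = m % 2
  set w' := f c with hw'def
  rcases le_or_gt w' a with hcomp | hcomp
  · have hw'W : w' ∈ W := by
      refine ⟨by omega, hcomp, by omega, ?_⟩
      have hw'1 : 1 ≤ w' := by omega
      exact (mult_pos_iff hB hw'1).mpr ⟨c, hc1, rfl⟩
    have := hmax w' hw'W
    omega
  · have hna : nGT f a = c := by
      have h1 : c ≤ nGT f a := ((mem_gt_iff hm hB a c).mp ⟨hc1, hcomp⟩).2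
      have h2 : ¬ (c + 1 ≤ nGT f a) := by
        intro hcon
        have := ((mem_gt_iff hm hB a (c+1)).mpr ⟨by omega, hcon⟩).2
        omega
      omega
    have := parityN hm hB a
    rw [hna, Nat.even_iff] at *
    omega

end NoBad

section DPair

variable {D : Set ℕ}

lemma D_split (hfin : D.Finite) (v : ℕ) :
    D.ncard = (D ∩ Set.Ioi v).ncard + (D ∩ Set.Iio v).ncard + (D ∩ {v}).ncard := by
  have h1 : D = (D ∩ Set.Ioi v) ∪ ((D ∩ Set.Iio v) ∪ (D ∩ {v})) := by
    ext x
    simp only [Set.mem_union, Set.mem_inter_iff, Set.mem_Ioi, Set.mem_Iio,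
      Set.mem_singleton_iff]
    constructor
    · intro hx
      rcases lt_trichotomy x v with h | h | h
      · exact Or.inr (Or.inl ⟨hx, h⟩)
      · exact Or.inr (Or.inr ⟨hx, h⟩)
      · exact Or.inl ⟨hx, h⟩
    · rintro (⟨h, _⟩ | ⟨h, _⟩ | ⟨h, _⟩) <;> exact h
  have d1 : Disjoint (D ∩ Set.Ioi v) ((D ∩ Set.Iio v) ∪ (D ∩ {v})) :=
    Set.disjoint_left.mpr (by
      rintro x ⟨_, h2⟩ (⟨_, h4⟩ | ⟨_, h4⟩)
      · simp only [Set.mem_Ioi] at h2; simp only [Set.mem_Iio] at h4; omega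
      · simp only [Set.mem_Ioi] at h2; simp only [Set.mem_singleton_iff] at h4; omega)
  have d2 : Disjoint (D ∩ Set.Iio v) (D ∩ {v}) :=
    Set.disjoint_left.mpr (by
      rintro x ⟨_, h2⟩ ⟨_, h4⟩
      simp only [Set.mem_Iio] at h2; simp only [Set.mem_singleton_iff] at h4; omega)
  have f1 : (D ∩ Set.Ioi v).Finite := Set.Finite.subset hfin Set.inter_subset_left
  have f2 : (D ∩ Set.Iio v).Finite := Set.Finite.subset hfin Set.inter_subset_left
  have f3 : (D ∩ {v}).Finite := Set.Finite.subset hfin Set.inter_subset_left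
  conv_lhs => rw [h1]
  rw [Set.ncard_union_eq d1 f1 (Set.Finite.union f2 f3),
    Set.ncard_union_eq d2 f2 f3]
  omega

lemma pairD (hfin : D.Finite) (heven : Even D.ncard) (v : ℕ)
    (h : v ∈ D ∨ Odd ((D ∩ Set.Ioi v).ncard)) :
    ∃ a b, (b < a ∧ a ∈ D ∧ b ∈ D ∧ Even ((D ∩ Set.Ioi a).ncard) ∧
      D ∩ Set.Ioo b a = ∅) ∧ b ≤ v ∧ v ≤ a := by
  have hIoifin : ∀ x : ℕ, (D ∩ Set.Ioi x).Finite :=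
    fun x => Set.Finite.subset hfin Set.inter_subset_left
  have hIiofin : ∀ x : ℕ, (D ∩ Set.Iio x).Finite :=
    fun x => Set.Finite.subset hfin Set.inter_subset_left
  -- helper: from odd count above v, get the minimum element above v
  have getmin : Odd ((D ∩ Set.Ioi v).ncard) →
      ∃ a, a ∈ D ∧ v < a ∧ Even ((D ∩ Set.Ioi a).ncard) ∧ D ∩ Set.Ioo v a = ∅ := by
    intro hodd
    have hne : (D ∩ Set.Ioi v).Nonempty := by
      rw [← Set.ncard_pos (hIoifin v)]
      rcases Nat.eq_zero_or_pos ((D ∩ Set.Ioi v).ncard) with h0 | h0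
      · rw [h0] at hodd; exact absurd hodd (by simp)
      · exact h0
    obtain ⟨a, hamem, hamin⟩ := set_exists_min (hIoifin v) hne
    obtain ⟨haD, hav⟩ := hamem
    simp only [Set.mem_Ioi] at hav
    have hsplit : D ∩ Set.Ioi v = insert a (D ∩ Set.Ioi a) := by
      ext x
      simp only [Set.mem_inter_iff, Set.mem_Ioi, Set.mem_insert_iff]
      constructor
      · rintro ⟨h1, h2⟩
        have := hamin x ⟨h1, h2⟩
        rcases eq_or_lt_of_le this with h | h
        · exact Or.inl h.symm
        · exact Or.inr ⟨h1, h⟩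
      · rintro (h | ⟨h1, h2⟩)
        · exact ⟨h ▸ haD, h ▸ hav⟩
        · exact ⟨h1, by omega⟩
    have heva : Even ((D ∩ Set.Ioi a).ncard) := by
      have : ((D ∩ Set.Ioi v).ncard) = (D ∩ Set.Ioi a).ncard + 1 := by
        rw [hsplit, Set.ncard_insert_of_notMem (by simp) (hIoifin a)]
      rw [Nat.odd_iff] at hodd
      rw [Nat.even_iff]
      omega
    have hioo : D ∩ Set.Ioo v a = ∅ := by
      ext x
      simp only [Set.mem_inter_iff, Set.mem_Ioo, Set.mem_empty_iff_false, iff_false]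
      rintro ⟨h1, h2, h3⟩
      have := hamin x ⟨h1, h2⟩
      omega
    exact ⟨a, haD, hav, heva, hioo⟩
  have getmax : (D ∩ Set.Iio v).Nonempty →
      ∃ b, b ∈ D ∧ b < v ∧ D ∩ Set.Ioo b v = ∅ := by
    intro hne
    obtain ⟨b, hbmem, hbmax⟩ := set_exists_max (hIiofin v) hne
    obtain ⟨hbD, hbv⟩ := hbmem
    simp only [Set.mem_Iio] at hbv
    refine ⟨b, hbD, hbv, ?_⟩
    ext x
    simp only [Set.mem_inter_iff, Set.mem_Ioo, Set.mem_empty_iff_false, iff_false]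
    rintro ⟨h1, h2, h3⟩
    have := hbmax x ⟨h1, h3⟩
    omega
  rcases h with hvD | hodd
  · by_cases hev : Even ((D ∩ Set.Ioi v).ncard)
    · -- v is the top of its pair
      have hsing : (D ∩ {v}).ncard = 1 := by
        have : D ∩ {v} = {v} := by
          ext x
          simp only [Set.mem_inter_iff, Set.mem_singleton_iff]
          exact ⟨fun h => h.2, fun h => ⟨h ▸ hvD, h⟩⟩
        rw [this, Set.ncard_singleton]
      have hbne : (D ∩ Set.Iio v).Nonempty := by
        rw [← Set.ncard_pos (hIiofin v)]
        have := D_split hfin v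
        rw [Nat.even_iff] at heven hev
        by_contra h0
        push_neg at h0
        interval_cases h : (D ∩ Set.Iio v).ncard
        · omega
      obtain ⟨b, hbD, hbv, hioo⟩ := getmax hbne
      exact ⟨v, b, ⟨hbv, hvD, hbD, hev, hioo⟩, by omega, le_refl v⟩
    · -- v is the bottom of its pair
      rw [Nat.not_even_iff_odd] at hev
      obtain ⟨a, haD, hav, heva, hioo⟩ := getmin hev
      exact ⟨a, v, ⟨hav, haD, hvD, heva, hioo⟩, le_refl v, by omega⟩
  · by_cases hvD : v ∈ D
    · obtain ⟨a, haD, hav, heva, hioo⟩ := getmin hodd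
      exact ⟨a, v, ⟨hav, haD, hvD, heva, hioo⟩, le_refl v, by omega⟩
    · -- v strictly inside a pair
      obtain ⟨a, haD, hav, heva, hiooa⟩ := getmin hodd
      have hbne : (D ∩ Set.Iio v).Nonempty := by
        rw [← Set.ncard_pos (hIiofin v)]
        have hsplit := D_split hfin v
        have hsing : (D ∩ {v}).ncard = 0 := by
          have : D ∩ {v} = ∅ := by
            ext x
            simp only [Set.mem_inter_iff, Set.mem_singleton_iff,
              Set.mem_empty_iff_false, iff_false]
            rintro ⟨h1, h2⟩
            exact hvD (h2 ▸ h1)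
          rw [this, Set.ncard_empty]
        rw [Nat.even_iff] at heven
        rw [Nat.odd_iff] at hodd
        by_contra h0
        push_neg at h0
        interval_cases h : (D ∩ Set.Iio v).ncard
        · omega
      obtain ⟨b, hbD, hbv, hioob⟩ := getmax hbne
      refine ⟨a, b, ⟨by omega, haD, hbD, heva, ?_⟩, by omega, by omega⟩
      ext x
      simp only [Set.mem_inter_iff, Set.mem_Ioo, Set.mem_empty_iff_false, iff_false]
      rintro ⟨h1, h2, h3⟩
      rcases lt_trichotomy x v with h | h | h
      · have : x ∈ D ∩ Set.Ioo b v := ⟨h1, by omega, h⟩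
        rw [hioob] at this
        exact this
      · exact hvD (h ▸ h1)
      · have : x ∈ D ∩ Set.Ioo v a := ⟨h1, by omega, h3⟩
        rw [hiooa] at this
        exact this

lemma pair_unique (hfin : D.Finite) {a b a' b' : ℕ}
    (h : b < a ∧ a ∈ D ∧ b ∈ D ∧ Even ((D ∩ Set.Ioi a).ncard) ∧ D ∩ Set.Ioo b a = ∅)
    (h' : b' < a' ∧ a' ∈ D ∧ b' ∈ D ∧ Even ((D ∩ Set.Ioi a').ncard) ∧
      D ∩ Set.Ioo b' a' = ∅)
    {v : ℕ} (hv : b ≤ v ∧ v ≤ a) (hv' : b' ≤ v ∧ v ≤ a') : a = a' ∧ b = b' := by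
  obtain ⟨hba, haD, hbD, hEv, hIoo⟩ := h
  obtain ⟨hba', haD', hbD', hEv', hIoo'⟩ := h'
  have key : ∀ (x y x' y' : ℕ), y < x → x ∈ D → y ∈ D →
      Even ((D ∩ Set.Ioi x).ncard) → D ∩ Set.Ioo y x = ∅ →
      y' < x' → x' ∈ D → y' ∈ D → Even ((D ∩ Set.Ioi x').ncard) →
      D ∩ Set.Ioo y' x' = ∅ → ∀ u, y ≤ u → u ≤ x → y' ≤ u → u ≤ x' →
      x < x' → False := by
    intro x y x' y' hyx hxD hyD hEvx hIoox hyx' hxD' hyD' hEvx' hIoox' u huy hux huy' hux' hxx'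
    -- x lies in [y', x') and x ∈ D
    have hxrange : y' ≤ x := le_trans huy' hux
    rcases eq_or_lt_of_le hxrange with heq | hlt
    · -- x = y' : bottom of one pair is top-ish contradiction via parities
      have hsplit : D ∩ Set.Ioi x = insert x' (D ∩ Set.Ioi x') := by
        ext z
        simp only [Set.mem_inter_iff, Set.mem_Ioi, Set.mem_insert_iff]
        constructor
        · rintro ⟨h1, h2⟩
          rcases lt_trichotomy z x' with hz | hz | hz
          · exfalso
            have : z ∈ D ∩ Set.Ioo y' x' := ⟨h1, by omega, hz⟩
            rw [hIoox'] at this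
            exact this
          · exact Or.inl hz
          · exact Or.inr ⟨h1, hz⟩
        · rintro (hz | ⟨h1, h2⟩)
          · exact ⟨hz ▸ hxD', by omega⟩
          · exact ⟨h1, by omega⟩
      have hfx : (D ∩ Set.Ioi x').Finite := Set.Finite.subset hfin Set.inter_subset_left
      have : (D ∩ Set.Ioi x).ncard = (D ∩ Set.Ioi x').ncard + 1 := by
        rw [hsplit, Set.ncard_insert_of_notMem (by simp) hfx]
      rw [Nat.even_iff] at hEvx hEvx'
      omega
    · -- y' < x < x' : x in the open interval of the second pair
      have : x ∈ D ∩ Set.Ioo y' x' := ⟨hxD, hlt, hxx'⟩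
      rw [hIoox'] at this
      exact this
  rcases lt_trichotomy a a' with hlt | heq | hlt
  · exact absurd (key a b a' b' hba haD hbD hEv hIoo hba' haD' hbD' hEv' hIoo' v hv.1 hv.2 hv'.1 hv'.2 hlt) (by simp)
  · subst heq
    constructor
    · rfl
    · rcases lt_trichotomy b b' with hlt | heq | hlt
      · exfalso
        have : b' ∈ D ∩ Set.Ioo b a := ⟨hbD', hlt, by omega⟩
        rw [hIoo] at this
        exact this
      · exact heq
      · exfalso
        have : b ∈ D ∩ Set.Ioo b' a := ⟨hbD, hlt, by omega⟩
        rw [hIoo'] at this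
        exact this
  · exact absurd (key a' b' a b hba' haD' hbD' hEv' hIoo' hba haD hbD hEv hIoo v hv'.1 hv'.2 hv.1 hv.2 hlt) (by simp)

end DPair

section Abstract

/-- `j` is the first index of an interval -/
def Lop (f : ℕ → ℕ) (I : Set ℕ → Prop) (j : ℕ) : Prop :=
  ∃ Δ, I Δ ∧ IsLeast (Jset f Δ) j

/-- `j` is the last index of an interval -/
def Gop (f : ℕ → ℕ) (I : Set ℕ → Prop) (j : ℕ) : Prop :=
  ∃ Δ, I Δ ∧ IsGreatest (Jset f Δ) j

/-- abstract interface describing the interval structure of a partition -/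
structure Iface (f : ℕ → ℕ) (I : Set ℕ → Prop) (good : ℕ → Prop) : Prop where
  mono : ∀ ⦃i j : ℕ⦄, 1 ≤ i → i ≤ j → f j ≤ f i
  disj : ∀ {Δ Δ' x}, I Δ → I Δ' → x ∈ Δ → x ∈ Δ' → Δ = Δ'
  conv : ∀ {Δ x y z}, I Δ → x ∈ Δ → z ∈ Δ → z ≤ y → y ≤ x →
    (y = 0 ∨ 1 ≤ mult f y) → y ∈ Δ
  cover : ∀ {j}, 1 ≤ j → good (f j) → ∃ Δ, I Δ ∧ f j ∈ Δ
  gval : ∀ {Δ x}, I Δ → x ∈ Δ → good x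
  Lodd : ∀ {j}, Lop f I j → Odd j
  Geven : ∀ {j}, Gop f I j → Even j
  vz : ∀ j, 1 ≤ j → f j = 0 ∨ 1 ≤ mult f (f j)

variable {f : ℕ → ℕ} {I : Set ℕ → Prop} {good : ℕ → Prop}

lemma mem_Jset {Δ : Set ℕ} {j : ℕ} : j ∈ Jset f Δ ↔ 1 ≤ j ∧ f j ∈ Δ := Iff.rfl

lemma abs_LE (h : Iface f I good) {j : ℕ} (hL : Lop f I j) : good (f j) := by
  obtain ⟨Δ, hΔ, hle⟩ := hL
  exact h.gval hΔ (mem_Jset.mp hle.1).2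

lemma abs_GE (h : Iface f I good) {j : ℕ} (hG : Gop f I j) : good (f j) := by
  obtain ⟨Δ, hΔ, hge⟩ := hG
  exact h.gval hΔ (mem_Jset.mp hge.1).2

lemma abs_notLG (h : Iface f I good) {j : ℕ} (hL : Lop f I j) (hG : Gop f I j) : False := by
  have h1 := h.Lodd hL
  have h2 := h.Geven hG
  rw [Nat.odd_iff] at h1
  rw [Nat.even_iff] at h2
  omega

lemma abs_5b (h : Iface f I good) {j : ℕ} (hj : 1 ≤ j) (hgj : good (f j))
    (hgj1 : ¬ good (f (j+1))) : Gop f I j := by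
  obtain ⟨Δ, hΔ, hmem⟩ := h.cover hj hgj
  refine ⟨Δ, hΔ, ⟨hj, hmem⟩, ?_⟩
  intro j' hj'
  rw [mem_Jset] at hj'
  by_contra hc
  push_neg at hc
  have hj'1 : j + 1 ≤ j' := hc
  have h1 : f j' ≤ f (j+1) := h.mono (by omega) hj'1
  have h2 : f (j+1) ≤ f j := h.mono hj (by omega)
  have : f (j+1) ∈ Δ := h.conv hΔ hmem hj'.2 h1 h2 (h.vz (j+1) (by omega))
  exact hgj1 (h.gval hΔ this)

lemma abs_5c (h : Iface f I good) {j : ℕ} (hj : 1 ≤ j) (hgj : ¬ good (f j))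
    (hgj1 : good (f (j+1))) : Lop f I (j+1) := by
  obtain ⟨Δ, hΔ, hmem⟩ := h.cover (by omega) hgj1
  refine ⟨Δ, hΔ, ⟨by omega, hmem⟩, ?_⟩
  intro j' hj'
  rw [mem_Jset] at hj'
  by_contra hc
  push_neg at hc
  have hj'j : j' ≤ j := by omega
  have h1 : f j ≤ f j' := h.mono hj'.1 hj'j
  have h2 : f (j+1) ≤ f j := h.mono hj (by omega)
  have : f j ∈ Δ := h.conv hΔ hj'.2 hmem h2 h1 (h.vz j hj)
  exact hgj (h.gval hΔ this)

lemma abs_5d (h : Iface f I good) {j : ℕ} (hj : 1 ≤ j) (hgj : good (f j))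
    (hL : Lop f I (j+1)) : Gop f I j := by
  obtain ⟨Δ', hΔ', hle⟩ := hL
  obtain ⟨Δ, hΔ, hmem⟩ := h.cover hj hgj
  have hjnot : f j ∉ Δ' := by
    intro hcon
    have : j ∈ Jset f Δ' := mem_Jset.mpr ⟨hj, hcon⟩
    have := hle.2 this
    omega
  refine ⟨Δ, hΔ, ⟨hj, hmem⟩, ?_⟩
  intro j' hj'
  rw [mem_Jset] at hj'
  by_contra hc
  push_neg at hc
  rcases eq_or_lt_of_le (show j + 1 ≤ j' by omega) with heq | hlt
  · -- j' = j+1 : f (j+1) ∈ Δ ∩ Δ'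
    have hmem1 : f (j+1) ∈ Δ := heq ▸ hj'.2
    have hmem2 : f (j+1) ∈ Δ' := (mem_Jset.mp hle.1).2
    have := h.disj hΔ hΔ' hmem1 hmem2
    exact hjnot (this ▸ hmem)
  · have h1 : f j' ≤ f (j+1) := h.mono (by omega) (by omega)
    have h2 : f (j+1) ≤ f j := h.mono hj (by omega)
    have hmem1 : f (j+1) ∈ Δ := h.conv hΔ hmem hj'.2 h1 h2 (h.vz (j+1) (by omega))
    have hmem2 : f (j+1) ∈ Δ' := (mem_Jset.mp hle.1).2
    have := h.disj hΔ hΔ' hmem1 hmem2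
    exact hjnot (this ▸ hmem)

lemma abs_5e (h : Iface f I good) {j : ℕ} (hj : 1 ≤ j) (hgj : good (f j))
    (hG : Gop f I j) (hgj1 : good (f (j+1))) : Lop f I (j+1) := by
  obtain ⟨Δ', hΔ', hmem'⟩ := h.cover (by omega) hgj1
  obtain ⟨Δ'', hΔ'', hge⟩ := hG
  have hjnot : f j ∉ Δ' := by
    intro hcon
    have heq : Δ' = Δ'' := h.disj hΔ' hΔ'' hcon (mem_Jset.mp hge.1).2
    have : j + 1 ∈ Jset f Δ'' := mem_Jset.mpr ⟨by omega, heq ▸ hmem'⟩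
    have := hge.2 this
    omega
  refine ⟨Δ', hΔ', ⟨by omega, hmem'⟩, ?_⟩
  intro j' hj'
  rw [mem_Jset] at hj'
  by_contra hc
  push_neg at hc
  rcases eq_or_lt_of_le (show j' ≤ j by omega) with heq | hlt
  · exact hjnot (heq ▸ hj'.2)
  · have h1 : f j ≤ f j' := h.mono hj'.1 (by omega)
    have h2 : f (j+1) ≤ f j := h.mono hj (by omega)
    have : f j ∈ Δ' := h.conv hΔ' hj'.2 hmem' h2 h1 (h.vz j hj)
    exact hjnot this

lemma abs_L1 (h : Iface f I good) (hg1 : good (f 1)) : Lop f I 1 := by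
  obtain ⟨Δ, hΔ, hmem⟩ := h.cover (le_refl 1) hg1
  exact ⟨Δ, hΔ, ⟨le_refl 1, hmem⟩, fun j' hj' => (mem_Jset.mp hj').1⟩

/-- value of the partial sums of `ζ` -/
lemma abs_V (h : Iface f I good) (z : ℕ → ℤ)
    (hz : ∀ j, z j = if Lop f I j then 1 else if Gop f I j then (-1 : ℤ) else 0) :
    ∀ k, Sz z k = if (1 ≤ k ∧ good (f k) ∧ ¬ Gop f I k) then 1 else 0 := by
  intro k
  induction k with
  | zero => simp [Sz]
  | succ k ih =>
    have hstep : Sz z (k+1) = Sz z k + z (k+1) := by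
      rw [Sz, Sz, Finset.sum_Icc_succ_top (by omega : 1 ≤ k + 1)]
    rcases Nat.eq_zero_or_pos k with hk0 | hk1
    · subst hk0
      have h01 : Sz z (0+1) = z 1 := by
        rw [Sz]
        simp
      rw [h01, hz 1]
      by_cases hg : good (f 1)
      · have hL := abs_L1 h hg
        have hnG : ¬ Gop f I 1 := by
          intro hG
          have := h.Geven hG
          rw [Nat.even_iff] at this
          omega
        rw [if_pos hL,
          if_pos (show 1 ≤ 0+1 ∧ good (f (0+1)) ∧ ¬Gop f I (0+1) from ⟨le_refl 1, hg, hnG⟩)]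
      · have hnL : ¬ Lop f I 1 := fun hL => hg (abs_LE h hL)
        have hnG : ¬ Gop f I 1 := fun hG => hg (abs_GE h hG)
        rw [if_neg hnL, if_neg hnG,
          if_neg (show ¬ (1 ≤ 0+1 ∧ good (f (0+1)) ∧ ¬Gop f I (0+1)) from by tauto)]
    · by_cases hA : good (f k) ∧ ¬ Gop f I k
      · -- previous position open
        rw [if_pos ⟨hk1, hA.1, hA.2⟩] at ih
        have hgk1 : good (f (k+1)) := by
          by_contra hc
          exact hA.2 (abs_5b h hk1 hA.1 hc)
        have hnL : ¬ Lop f I (k+1) := fun hL => hA.2 (abs_5d h hk1 hA.1 hL)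
        by_cases hG : Gop f I (k+1)
        · rw [hstep, ih, hz (k+1), if_neg hnL, if_pos hG, if_neg (by tauto)]
          ring
        · rw [hstep, ih, hz (k+1), if_neg hnL, if_neg hG,
            if_pos ⟨by omega, hgk1, hG⟩]
          ring
      · -- previous position closed
        rw [if_neg (by tauto)] at ih
        by_cases hg : good (f (k+1))
        · have hL : Lop f I (k+1) := by
            by_cases hgk : good (f k)
            · have hGk : Gop f I k := by tauto
              exact abs_5e h hk1 hgk hGk hg
            · exact abs_5c h hk1 hgk hg
          have hnG : ¬ Gop f I (k+1) := fun hG => abs_notLG h hL hG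
          rw [hstep, ih, hz (k+1), if_pos hL, if_pos ⟨by omega, hg, hnG⟩]
          ring
        · have hnL : ¬ Lop f I (k+1) := fun hL => hg (abs_LE h hL)
          have hnG : ¬ Gop f I (k+1) := fun hG => hg (abs_GE h hG)
          rw [hstep, ih, hz (k+1), if_neg hnL, if_neg hnG, if_neg (by tauto)]
          ring

end Abstract

section Boundary

variable {f : ℕ → ℕ} {B : ℕ}

/-- the least element of `J(Δ)` is the first index with value `≤ a` (the top of `Δ`) -/
lemma least_eq (hm : ∀ ⦃i j : ℕ⦄, 1 ≤ i → i ≤ j → f j ≤ f i)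
    (hB : ∀ j, B < j → f j = 0) {Δ : Set ℕ} {a j : ℕ}
    (htop : ∀ x ∈ Δ, x ≤ a) (hfirst : f (nGT f a + 1) ∈ Δ)
    (hle : IsLeast (Jset f Δ) j) : j = nGT f a + 1 := by
  have hmem : nGT f a + 1 ∈ Jset f Δ := mem_Jset.mpr ⟨by omega, hfirst⟩
  have h1 : j ≤ nGT f a + 1 := hle.2 hmem
  have hj := mem_Jset.mp hle.1
  have h2 : ¬ (a < f j) := by
    intro hcon
    exact absurd (htop (f j) hj.2) (by omega)
  have h3 : ¬ (j ≤ nGT f a) := by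
    intro hcon
    have := ((mem_gt_iff hm hB a j).mpr ⟨hj.1, hcon⟩).2
    omega
  omega

/-- the greatest element of `J(Δ)` is the last index with value `≥ b` (the bottom of `Δ`) -/
lemma greatest_eq (hm : ∀ ⦃i j : ℕ⦄, 1 ≤ i → i ≤ j → f j ≤ f i)
    (hB : ∀ j, B < j → f j = 0) {Δ : Set ℕ} {b j : ℕ} (hb1 : 1 ≤ b)
    (hbot : ∀ x ∈ Δ, b ≤ x) (hbΔ : b ∈ Δ) (hmb : 1 ≤ mult f b)
    (hge : IsGreatest (Jset f Δ) j) : j = nGT f (b-1) := by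
  obtain ⟨j', hj'1, hj'b⟩ := (mult_pos_iff hB hb1).mp hmb
  set c := nGT f (b-1) with hc
  have hj'le : j' ≤ c := by
    have := (mem_gt_iff hm hB (b-1) j').mp ⟨hj'1, by omega⟩
    omega
  have hc1 : 1 ≤ c := by omega
  have hfc_ge : b - 1 < f c := ((mem_gt_iff hm hB (b-1) c).mpr ⟨hc1, le_refl c⟩).2
  have hfc_le : f c ≤ b := hj'b ▸ hm hj'1 hj'le
  have hfc : f c = b := by omega
  have hcmem : c ∈ Jset f Δ := mem_Jset.mpr ⟨hc1, hfc ▸ hbΔ⟩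
  have h1 : c ≤ j := hge.2 hcmem
  have hj := mem_Jset.mp hge.1
  have h2 : b ≤ f j := hbot (f j) hj.2
  have h3 : j ≤ c := by
    have := (mem_gt_iff hm hB (b-1) j).mp ⟨hj.1, by omega⟩
    omega
  omega

/-- an interval containing `0` has no greatest index -/
lemma no_greatest_of_zero (hB : ∀ j, B < j → f j = 0) {Δ : Set ℕ}
    (h0 : (0 : ℕ) ∈ Δ) {j : ℕ} (hge : IsGreatest (Jset f Δ) j) : False := by
  have hmem : max (j+1) (B+1) ∈ Jset f Δ :=
    mem_Jset.mpr ⟨by omega, by rw [hB _ (by omega)]; exact h0⟩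
  have := hge.2 hmem
  omega

end Boundary

section DsympFacts

variable {f : ℕ → ℕ} {B : ℕ}

lemma Dsymp_inter_Ioi (f : ℕ → ℕ) (v : ℕ) :
    Dsymp f ∩ Set.Ioi v = OddSet f ∩ Set.Ioi v := by
  ext x
  simp only [Set.mem_inter_iff, Set.mem_Ioi, Dsymp, OddSet, Set.mem_setOf_eq]
  constructor
  · rintro ⟨h1 | h1, h2⟩
    · exact ⟨h1, h2⟩
    · omega
  · rintro ⟨h1, h2⟩
    exact ⟨Or.inl h1, h2⟩

lemma Dsymp_fin (hm : ∀ ⦃i j : ℕ⦄, 1 ≤ i → i ≤ j → f j ≤ f i)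
    (hB : ∀ j, B < j → f j = 0) : (Dsymp f).Finite := by
  apply Set.Finite.subset ((OddSet_fin hm hB).union (Set.finite_singleton 0))
  rintro x (h | h)
  · exact Or.inl h
  · exact Or.inr (by simp [h.1])

lemma zero_not_OddSet (hB : ∀ j, B < j → f j = 0) : (0 : ℕ) ∉ OddSet f := by
  intro h
  have : Odd (mult f 0) := h
  rw [mult_zero hB] at this
  exact absurd this (by simp)

lemma Dsymp_even (hm : ∀ ⦃i j : ℕ⦄, 1 ≤ i → i ≤ j → f j ≤ f i)
    (hB : ∀ j, B < j → f j = 0) : Even ((Dsymp f).ncard) := by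
  by_cases h : Odd ((OddSet f).ncard)
  · have heq : Dsymp f = insert 0 (OddSet f) := by
      ext x
      simp only [Dsymp, OddSet, Set.mem_setOf_eq, Set.mem_insert_iff]
      constructor
      · rintro (h1 | h1)
        · exact Or.inr h1
        · exact Or.inl h1.1
      · rintro (h1 | h1)
        · exact Or.inr ⟨h1, h⟩
        · exact Or.inl h1
    rw [heq, Set.ncard_insert_of_notMem (zero_not_OddSet hB) (OddSet_fin hm hB)]
    rw [Nat.odd_iff] at h
    rw [Nat.even_iff]
    omega
  · have heq : Dsymp f = OddSet f := by
      ext x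
      simp only [Dsymp, OddSet, Set.mem_setOf_eq]
      constructor
      · rintro (h1 | h1)
        · exact h1
        · exact absurd h1.2 h
      · exact fun h1 => Or.inl h1
    rw [heq]
    rwa [Nat.not_odd_iff_even] at h
  done

end DsympFacts

section OrthCard

variable {f : ℕ → ℕ} {B : ℕ}

lemma orth_card_even (hm : ∀ ⦃i j : ℕ⦄, 1 ≤ i → i ≤ j → f j ≤ f i)
    (hB : ∀ j, B < j → f j = 0) (hsp : SpecialPairs f)
    (ho : ∀ v, 2 ≤ v → Even v → Even (mult f v)) :
    Even ((OddSet f).ncard) := by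
  have claim : ∀ n v, f 1 ≤ v + n → 2 ≤ v → v % 2 = 0 → 1 ≤ mult f v →
      nGT f (v-1) % 2 = 0 := by
    intro n
    induction n with
    | zero =>
      intro v hv hv2 hvpar hmv
      have hstep := nGT_step hm hB (v-1)
      rw [show v - 1 + 1 = v by omega] at hstep
      have h0 : nGT f v = 0 := by
        rw [nGT, Set.ncard_eq_zero (gt_fin hB v)]
        ext j
        simp only [Set.mem_setOf_eq, Set.mem_empty_iff_false, iff_false]
        rintro ⟨hj1, hj2⟩
        have := hm (le_refl 1) hj1
        omega
      have := ho v hv2 (Nat.even_iff.mpr hvpar)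
      rw [Nat.even_iff] at this
      omega
    | succ n ih =>
      intro v hv hv2 hvpar hmv
      by_cases hcase : f 1 ≤ v + n
      · exact ih v hcase hv2 hvpar hmv
      · push_neg at hcase
        by_contra hodd
        have hodd' : nGT f (v-1) % 2 = 1 := by omega
        have hstep := nGT_step hm hB (v-1)
        rw [show v - 1 + 1 = v by omega] at hstep
        have hmvpar : mult f v % 2 = 0 := by
          have := ho v hv2 (Nat.even_iff.mpr hvpar)
          rwa [Nat.even_iff] at this
        set c := nGT f v with hcdef
        have hc1 : c % 2 = 1 := by omega
        have hcpos : 1 ≤ c := by omega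
        have hw : v < f c := ((mem_gt_iff hm hB v c).mpr ⟨hcpos, le_refl c⟩).2
        have hfc1 : f (c+1) = v := first_occ hm hB ((mult_pos_iff hB (by omega)).mp hmv)
        obtain ⟨u, hu1, hu2, hu3⟩ : ∃ u, 1 ≤ u ∧ 2*u - 1 = c ∧ 2*u = c + 1 :=
          ⟨(c+1)/2, by omega⟩
        have hspu := hsp u hu1
        rw [hu2, hu3, hfc1] at hspu
        set w := f c with hwdef
        have hw2 : 2 ≤ w := by omega
        have hwpar : w % 2 = 0 := by omega
        have hmw : 1 ≤ mult f w := (mult_pos_iff hB (by omega)).mpr ⟨c, hcpos, rfl⟩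
        have hnw : nGT f (w-1) = c := by
          have h1 : c ≤ nGT f (w-1) :=
            ((mem_gt_iff hm hB (w-1) c).mp ⟨hcpos, by omega⟩).2
          have h2 : ¬ (c + 1 ≤ nGT f (w-1)) := by
            intro hcon
            have := ((mem_gt_iff hm hB (w-1) (c+1)).mpr ⟨by omega, hcon⟩).2
            omega
          omega
        have := ih w (by omega) hw2 hwpar hmw
        rw [hnw] at this
        omega
  by_contra hoddO
  rw [Nat.not_even_iff_odd, Nat.odd_iff] at hoddO
  have hO0 : OddSet f ∩ Set.Ioi 0 = OddSet f := by
    ext x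
    simp only [Set.mem_inter_iff, Set.mem_Ioi]
    constructor
    · exact fun h => h.1
    · intro h
      refine ⟨h, ?_⟩
      have := (OddSet_sub hm hB x h).1
      omega
  have hs : nGT f 0 % 2 = 1 := by
    rw [parityN hm hB 0, hO0]
    exact hoddO
  set s := nGT f 0 with hsdef
  have hs1 : 1 ≤ s := by omega
  have hfs : 0 < f s := ((mem_gt_iff hm hB 0 s).mpr ⟨hs1, le_refl s⟩).2
  have hfs1 : f (s+1) = 0 := zero_occ hm hB
  obtain ⟨u, hu1, hu2, hu3⟩ : ∃ u, 1 ≤ u ∧ 2*u - 1 = s ∧ 2*u = s + 1 :=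
    ⟨(s+1)/2, by omega⟩
  have hspu := hsp u hu1
  rw [hu2, hu3, hfs1] at hspu
  set v0 := f s with hv0def
  have hv02 : 2 ≤ v0 := by omega
  have hmv0 : 1 ≤ mult f v0 := (mult_pos_iff hB (by omega)).mpr ⟨s, hs1, rfl⟩
  have hnv0 : nGT f (v0 - 1) = s := by
    have h1 : s ≤ nGT f (v0-1) :=
      ((mem_gt_iff hm hB (v0-1) s).mp ⟨hs1, by omega⟩).2
    have h2 : ¬ (s + 1 ≤ nGT f (v0-1)) := by
      intro hcon
      have := ((mem_gt_iff hm hB (v0-1) (s+1)).mpr ⟨by omega, hcon⟩).2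
      omega
    omega
  have := claim (f 1) v0 (by omega) hv02 (by omega) hmv0
  rw [hnv0] at this
  omega

end OrthCard

section SetSplit

lemma ncard_two_split {S : Set ℕ} (hfin : S.Finite) {a b : ℕ} (hb1 : 1 ≤ b)
    (hba : b < a) (haS : a ∈ S) (hbS : b ∈ S) (hIoo : S ∩ Set.Ioo b a = ∅) :
    (S ∩ Set.Ioi (b-1)).ncard = (S ∩ Set.Ioi a).ncard + 2 := by
  have hseq : S ∩ Set.Ioi (b-1) = insert a (insert b (S ∩ Set.Ioi a)) := by
    ext x
    simp only [Set.mem_inter_iff, Set.mem_Ioi, Set.mem_insert_iff]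
    constructor
    · rintro ⟨h1, h2⟩
      rcases lt_trichotomy x a with h | h | h
      · rcases eq_or_lt_of_le (show b ≤ x by omega) with hx | hx
        · exact Or.inr (Or.inl hx.symm)
        · exfalso
          have : x ∈ S ∩ Set.Ioo b a := ⟨h1, hx, h⟩
          rw [hIoo] at this
          exact this
      · exact Or.inl h
      · exact Or.inr (Or.inr ⟨h1, h⟩)
    · rintro (h | h | ⟨h1, h2⟩)
      · exact ⟨h ▸ haS, by omega⟩
      · exact ⟨h ▸ hbS, by omega⟩
      · exact ⟨h1, by omega⟩
  have hf1 : (S ∩ Set.Ioi a).Finite := Set.Finite.subset hfin Set.inter_subset_left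
  have hnb : b ∉ S ∩ Set.Ioi a := by
    rintro ⟨_, h⟩
    simp only [Set.mem_Ioi] at h
    omega
  have hna : a ∉ insert b (S ∩ Set.Ioi a) := by
    rintro (h | ⟨_, h⟩)
    · omega
    · simp only [Set.mem_Ioi] at h
      omega
  rw [hseq, Set.ncard_insert_of_notMem hna ((hf1.insert b)),
    Set.ncard_insert_of_notMem hnb hf1]

lemma ncard_skip {S : Set ℕ} {i : ℕ} (hi1 : 1 ≤ i) (hiS : i ∉ S) :
    S ∩ Set.Ioi (i-1) = S ∩ Set.Ioi i := by
  ext x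
  simp only [Set.mem_inter_iff, Set.mem_Ioi]
  constructor
  · rintro ⟨h1, h2⟩
    refine ⟨h1, ?_⟩
    rcases eq_or_lt_of_le (show i ≤ x by omega) with h | h
    · exact absurd (h ▸ h1) hiS
    · exact h
  · rintro ⟨h1, h2⟩
    exact ⟨h1, by omega⟩

end SetSplit

section Iface1

variable {f : ℕ → ℕ} {B : ℕ}

lemma Dsymp_mem_pos {a : ℕ} (ha : a ∈ Dsymp f) (hpos : 1 ≤ a) : a ∈ OddSet f := by
  rcases ha with h | h
  · exact h
  · omega

lemma pairedS_facts (hm : ∀ ⦃i j : ℕ⦄, 1 ≤ i → i ≤ j → f j ≤ f i)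
    (hB : ∀ j, B < j → f j = 0) (h1s : Symp f) {a b : ℕ} (hp : PairedS f a b) :
    a % 2 = 0 ∧ a ∈ OddSet f ∧ 1 ≤ mult f a ∧
      Even ((OddSet f ∩ Set.Ioi a).ncard) ∧ OddSet f ∩ Set.Ioo b a = ∅ := by
  obtain ⟨hba, haD, hbD, hEv, hIoo⟩ := hp
  have haO : a ∈ OddSet f := Dsymp_mem_pos haD (by omega)
  have haodd : Odd (mult f a) := haO
  have hapar : a % 2 = 0 := by
    by_contra hc
    have : Odd a := Nat.odd_iff.mpr (by omega)
    have := h1s a this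
    rw [Nat.even_iff] at this
    rw [Nat.odd_iff] at haodd
    omega
  have hEv' : Even ((OddSet f ∩ Set.Ioi a).ncard) := by
    rwa [Dsymp_inter_Ioi] at hEv
  have hIoo' : OddSet f ∩ Set.Ioo b a = ∅ := by
    apply Set.eq_empty_of_subset_empty
    rw [← hIoo]
    exact Set.inter_subset_inter_left _ (fun x hx => Or.inl hx)
  have hma : 1 ≤ mult f a := by
    rw [Nat.odd_iff] at haodd
    omega
  exact ⟨hapar, haO, hma, hEv', hIoo'⟩

lemma pairedS_val_even (hm : ∀ ⦃i j : ℕ⦄, 1 ≤ i → i ≤ j → f j ≤ f i)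
    (hB : ∀ j, B < j → f j = 0) (hsp : SpecialPairs f) (h1s : Symp f)
    {a b : ℕ} (hp : PairedS f a b) {x : ℕ}
    (hx : (x = 0 ∨ 1 ≤ mult f x) ∧ b ≤ x ∧ x ≤ a) : Even x := by
  obtain ⟨hapar, haO, hma, hEv, hIoo⟩ := pairedS_facts hm hB h1s hp
  rcases hx.1 with h0 | hmx
  · simp [h0]
  · by_contra hc
    rw [Nat.not_even_iff_odd, Nat.odd_iff] at hc
    have := noBad hm hB hsp hp.1 haO hEv hIoo x hx.2.1 hx.2.2 (by omega)
    omega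

lemma iface1 (hm : ∀ ⦃i j : ℕ⦄, 1 ≤ i → i ≤ j → f j ≤ f i)
    (hB : ∀ j, B < j → f j = 0) (h1s : Symp f) (hsp : SpecialPairs f) :
    Iface f (IsIntervalS f) Even := by
  have hDfin : (Dsymp f).Finite := Dsymp_fin hm hB
  have hDev : Even ((Dsymp f).ncard) := Dsymp_even hm hB
  have hOfin : (OddSet f).Finite := OddSet_fin hm hB
  have noPairEven : ∀ i : ℕ, (¬ ∃ a b, PairedS f a b ∧ b ≤ i ∧ i ≤ a) →
      Even ((OddSet f ∩ Set.Ioi i).ncard) ∧ i ∉ OddSet f := by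
    intro i hnp
    constructor
    · by_contra hc
      rw [Nat.not_even_iff_odd, ← Dsymp_inter_Ioi] at hc
      obtain ⟨a, b, hsh, hb, ha⟩ := pairD hDfin hDev i (Or.inr hc)
      exact hnp ⟨a, b, hsh, hb, ha⟩
    · intro hiO
      obtain ⟨a, b, hsh, hb, ha⟩ := pairD hDfin hDev i (Or.inl (Or.inl hiO))
      exact hnp ⟨a, b, hsh, hb, ha⟩
  refine ⟨hm, ?_, ?_, ?_, ?_, ?_, ?_, ?_⟩
  · -- disj
    intro Δ Δ' x hΔ hΔ' hx hx'
    rcases hΔ with ⟨a, b, hp, rfl⟩ | ⟨i, hie, hi0, hnp, rfl⟩ <;>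
      rcases hΔ' with ⟨a', b', hp', rfl⟩ | ⟨i', hie', hi0', hnp', rfl⟩
    · simp only [Set.mem_setOf_eq] at hx hx'
      obtain ⟨ha, hb⟩ := pair_unique hDfin hp hp' ⟨hx.2.1, hx.2.2⟩ ⟨hx'.2.1, hx'.2.2⟩
      rw [ha, hb]
    · exfalso
      simp only [Set.mem_singleton_iff] at hx'
      subst hx'
      simp only [Set.mem_setOf_eq] at hx
      exact hnp' ⟨a, b, hp, hx.2.1, hx.2.2⟩
    · exfalso
      simp only [Set.mem_singleton_iff] at hx
      subst hx
      simp only [Set.mem_setOf_eq] at hx'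
      exact hnp ⟨a', b', hp', hx'.2.1, hx'.2.2⟩
    · simp only [Set.mem_singleton_iff] at hx hx'
      rw [← hx, hx']
  · -- conv
    intro Δ x y z hΔ hx hz hzy hyx hy
    rcases hΔ with ⟨a, b, hp, rfl⟩ | ⟨i, hie, hi0, hnp, rfl⟩
    · simp only [Set.mem_setOf_eq] at hx hz ⊢
      exact ⟨hy, le_trans hz.2.1 hzy, le_trans hyx hx.2.2⟩
    · simp only [Set.mem_singleton_iff] at hx hz ⊢
      omega
  · -- cover
    intro j hj hgj
    have hv : f j = 0 ∨ 1 ≤ mult f (f j) := by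
      rcases Nat.eq_zero_or_pos (f j) with h | h
      · exact Or.inl h
      · exact Or.inr ((mult_pos_iff hB h).mpr ⟨j, hj, rfl⟩)
    by_cases hex : ∃ a b, PairedS f a b ∧ b ≤ f j ∧ f j ≤ a
    · obtain ⟨a, b, hp, hb, ha⟩ := hex
      exact ⟨{i | (i = 0 ∨ 1 ≤ mult f i) ∧ b ≤ i ∧ i ≤ a},
        Or.inl ⟨a, b, hp, rfl⟩, by simp only [Set.mem_setOf_eq]; exact ⟨hv, hb, ha⟩⟩
    · refine ⟨{f j}, Or.inr ⟨f j, hgj, ?_, hex, rfl⟩, rfl⟩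
      rcases Nat.eq_zero_or_pos (f j) with h0 | hpos
      · exact Or.inl h0
      · refine Or.inr ⟨?_, (mult_pos_iff hB hpos).mpr ⟨j, hj, rfl⟩⟩
        have hgj' : f j % 2 = 0 := Nat.even_iff.mp hgj
        omega
  · -- gval
    intro Δ x hΔ hx
    rcases hΔ with ⟨a, b, hp, rfl⟩ | ⟨i, hie, hi0, hnp, rfl⟩
    · exact pairedS_val_even hm hB hsp h1s hp hx
    · simp only [Set.mem_singleton_iff] at hx
      exact hx ▸ hie
  · -- Lodd
    rintro j ⟨Δ, hΔ, hle⟩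
    rcases hΔ with ⟨a, b, hp, rfl⟩ | ⟨i, hie, hi0, hnp, rfl⟩
    · obtain ⟨hapar, haO, hma, hEv, hIoo⟩ := pairedS_facts hm hB h1s hp
      have htop : ∀ x ∈ {i | (i = 0 ∨ 1 ≤ mult f i) ∧ b ≤ i ∧ i ≤ a}, x ≤ a :=
        fun x hx => hx.2.2
      have ha1 : 1 ≤ a := by
        have := hp.1
        omega
      have hfirst : f (nGT f a + 1) ∈ {i | (i = 0 ∨ 1 ≤ mult f i) ∧ b ≤ i ∧ i ≤ a} := by
        rw [first_occ hm hB ((mult_pos_iff hB ha1).mp hma)]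
        exact ⟨Or.inr hma, le_of_lt hp.1, le_refl a⟩
      have hj := least_eq hm hB htop hfirst hle
      have := parityN hm hB a
      rw [Nat.even_iff] at hEv
      rw [Nat.odd_iff]
      omega
    · have htop : ∀ x ∈ ({i} : Set ℕ), x ≤ i := by
        intro x hx
        simp only [Set.mem_singleton_iff] at hx
        omega
      have hfirst : f (nGT f i + 1) ∈ ({i} : Set ℕ) := by
        rcases hi0 with h0 | ⟨hi2, hmi⟩
        · subst h0
          simp [zero_occ hm hB]
        · simp [first_occ hm hB ((mult_pos_iff hB (by omega)).mp hmi)]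
      have hj := least_eq hm hB htop hfirst hle
      have hEv := (noPairEven i hnp).1
      have := parityN hm hB i
      rw [Nat.even_iff] at hEv
      rw [Nat.odd_iff]
      omega
  · -- Geven
    rintro j ⟨Δ, hΔ, hge⟩
    rcases hΔ with ⟨a, b, hp, rfl⟩ | ⟨i, hie, hi0, hnp, rfl⟩
    · obtain ⟨hapar, haO, hma, hEv, hIoo⟩ := pairedS_facts hm hB h1s hp
      rcases Nat.eq_zero_or_pos b with hb0 | hb1
      · exfalso
        apply no_greatest_of_zero hB _ hge
        subst hb0
        exact ⟨Or.inl rfl, le_refl 0, by omega⟩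
      · have hbO : b ∈ OddSet f := Dsymp_mem_pos hp.2.2.1 hb1
        have hbodd : Odd (mult f b) := hbO
        have hmb : 1 ≤ mult f b := by
          rw [Nat.odd_iff] at hbodd
          omega
        have hbot : ∀ x ∈ {i | (i = 0 ∨ 1 ≤ mult f i) ∧ b ≤ i ∧ i ≤ a}, b ≤ x :=
          fun x hx => hx.2.1
        have hbΔ : b ∈ {i | (i = 0 ∨ 1 ≤ mult f i) ∧ b ≤ i ∧ i ≤ a} :=
          ⟨Or.inr hmb, le_refl b, le_of_lt hp.1⟩
        have hj := greatest_eq hm hB hb1 hbot hbΔ hmb hge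
        have hsplit := ncard_two_split hOfin hb1 hp.1 haO hbO hIoo
        have := parityN hm hB (b-1)
        rw [Nat.even_iff] at hEv
        rw [Nat.even_iff]
        omega
    · rcases hi0 with h0 | ⟨hi2, hmi⟩
      · exfalso
        apply no_greatest_of_zero hB _ hge
        subst h0
        rfl
      · have hbot : ∀ x ∈ ({i} : Set ℕ), i ≤ x := by
          intro x hx
          simp only [Set.mem_singleton_iff] at hx
          omega
        have hj := greatest_eq hm hB (by omega) hbot rfl hmi hge
        obtain ⟨hEv, hiO⟩ := noPairEven i hnp
        have hskip := ncard_skip (by omega : 1 ≤ i) hiO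
        have := parityN hm hB (i-1)
        rw [hskip] at this
        rw [Nat.even_iff] at hEv
        rw [Nat.even_iff]
        omega
  · -- vz
    intro j hj
    rcases Nat.eq_zero_or_pos (f j) with h | h
    · exact Or.inl h
    · exact Or.inr ((mult_pos_iff hB h).mpr ⟨j, hj, rfl⟩)

end Iface1

section Iface2

variable {f : ℕ → ℕ} {B : ℕ}

lemma pairedOE_facts (hm : ∀ ⦃i j : ℕ⦄, 1 ≤ i → i ≤ j → f j ≤ f i)
    (hB : ∀ j, B < j → f j = 0) (h2o : Orth f) {a b : ℕ} (hp : PairedOE f a b) :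
    a % 2 = 1 ∧ 1 ≤ mult f a ∧ 1 ≤ b ∧ 1 ≤ mult f b := by
  obtain ⟨hba, haO, hbO, hEv, hIoo⟩ := hp
  have haodd : Odd (mult f a) := haO
  have hbodd : Odd (mult f b) := hbO
  have hb1 : 1 ≤ b := (OddSet_sub hm hB b hbO).1
  have hapar : a % 2 = 1 := by
    by_contra hc
    have heva : Even a := Nat.even_iff.mpr (by omega)
    have := h2o a heva (by omega)
    rw [Nat.even_iff] at this
    rw [Nat.odd_iff] at haodd
    omega
  rw [Nat.odd_iff] at haodd hbodd
  exact ⟨hapar, by omega, hb1, by omega⟩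

lemma pairedOE_val_odd (hm : ∀ ⦃i j : ℕ⦄, 1 ≤ i → i ≤ j → f j ≤ f i)
    (hB : ∀ j, B < j → f j = 0) (hsp : SpecialPairs f) (h2o : Orth f)
    {a b : ℕ} (hp : PairedOE f a b) {x : ℕ}
    (hx : 1 ≤ mult f x ∧ b ≤ x ∧ x ≤ a) : Odd x := by
  obtain ⟨hapar, hma, hb1, hmb⟩ := pairedOE_facts hm hB h2o hp
  by_contra hc
  rw [Nat.not_odd_iff_even, Nat.even_iff] at hc
  have := noBad hm hB hsp hp.1 hp.2.1 hp.2.2.2.1 hp.2.2.2.2 x hx.2.1 hx.2.2 (by omega)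
  omega

lemma iface2 (hm : ∀ ⦃i j : ℕ⦄, 1 ≤ i → i ≤ j → f j ≤ f i)
    (hB : ∀ j, B < j → f j = 0) (h2o : Orth f) (hsp : SpecialPairs f) :
    Iface f (IsIntervalOE f) Odd := by
  have hOfin : (OddSet f).Finite := OddSet_fin hm hB
  have hOev : Even ((OddSet f).ncard) := by
    apply orth_card_even hm hB hsp
    intro v hv2 hvev
    exact h2o v hvev (by omega)
  have noPairEven : ∀ i : ℕ, (¬ ∃ a b, PairedOE f a b ∧ b ≤ i ∧ i ≤ a) →
      Even ((OddSet f ∩ Set.Ioi i).ncard) ∧ i ∉ OddSet f := by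
    intro i hnp
    constructor
    · by_contra hc
      rw [Nat.not_even_iff_odd] at hc
      obtain ⟨a, b, hsh, hb, ha⟩ := pairD hOfin hOev i (Or.inr hc)
      exact hnp ⟨a, b, hsh, hb, ha⟩
    · intro hiO
      obtain ⟨a, b, hsh, hb, ha⟩ := pairD hOfin hOev i (Or.inl hiO)
      exact hnp ⟨a, b, hsh, hb, ha⟩
  have hmultpos : ∀ {z : ℕ}, 1 ≤ mult f z → 1 ≤ z := by
    intro z hz
    rcases Nat.eq_zero_or_pos z with h | h
    · subst h
      rw [mult_zero hB] at hz
      omega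
    · exact h
  refine ⟨hm, ?_, ?_, ?_, ?_, ?_, ?_, ?_⟩
  · -- disj
    intro Δ Δ' x hΔ hΔ' hx hx'
    rcases hΔ with ⟨a, b, hp, rfl⟩ | ⟨i, hie, hmi, hnp, rfl⟩ <;>
      rcases hΔ' with ⟨a', b', hp', rfl⟩ | ⟨i', hie', hmi', hnp', rfl⟩
    · simp only [Set.mem_setOf_eq] at hx hx'
      obtain ⟨ha, hb⟩ := pair_unique hOfin hp hp' ⟨hx.2.1, hx.2.2⟩ ⟨hx'.2.1, hx'.2.2⟩
      rw [ha, hb]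
    · exfalso
      simp only [Set.mem_singleton_iff] at hx'
      subst hx'
      simp only [Set.mem_setOf_eq] at hx
      exact hnp' ⟨a, b, hp, hx.2.1, hx.2.2⟩
    · exfalso
      simp only [Set.mem_singleton_iff] at hx
      subst hx
      simp only [Set.mem_setOf_eq] at hx'
      exact hnp ⟨a', b', hp', hx'.2.1, hx'.2.2⟩
    · simp only [Set.mem_singleton_iff] at hx hx'
      rw [← hx, hx']
  · -- conv
    intro Δ x y z hΔ hx hz hzy hyx hy
    rcases hΔ with ⟨a, b, hp, rfl⟩ | ⟨i, hie, hmi, hnp, rfl⟩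
    · simp only [Set.mem_setOf_eq] at hx hz ⊢
      have hz1 : 1 ≤ z := hmultpos hz.1
      have hmy : 1 ≤ mult f y := by
        rcases hy with h0 | h
        · omega
        · exact h
      exact ⟨hmy, le_trans hz.2.1 hzy, le_trans hyx hx.2.2⟩
    · simp only [Set.mem_singleton_iff] at hx hz ⊢
      omega
  · -- cover
    intro j hj hgj
    have hpos : 1 ≤ f j := by
      rw [Nat.odd_iff] at hgj
      omega
    have hv : 1 ≤ mult f (f j) := (mult_pos_iff hB hpos).mpr ⟨j, hj, rfl⟩
    by_cases hex : ∃ a b, PairedOE f a b ∧ b ≤ f j ∧ f j ≤ a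
    · obtain ⟨a, b, hp, hb, ha⟩ := hex
      exact ⟨{i | 1 ≤ mult f i ∧ b ≤ i ∧ i ≤ a},
        Or.inl ⟨a, b, hp, rfl⟩, by simp only [Set.mem_setOf_eq]; exact ⟨hv, hb, ha⟩⟩
    · exact ⟨{f j}, Or.inr ⟨f j, hgj, hv, hex, rfl⟩, rfl⟩
  · -- gval
    intro Δ x hΔ hx
    rcases hΔ with ⟨a, b, hp, rfl⟩ | ⟨i, hie, hmi, hnp, rfl⟩
    · exact pairedOE_val_odd hm hB hsp h2o hp hx
    · simp only [Set.mem_singleton_iff] at hx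
      exact hx ▸ hie
  · -- Lodd
    rintro j ⟨Δ, hΔ, hle⟩
    rcases hΔ with ⟨a, b, hp, rfl⟩ | ⟨i, hie, hmi, hnp, rfl⟩
    · obtain ⟨hapar, hma, hb1, hmb⟩ := pairedOE_facts hm hB h2o hp
      have htop : ∀ x ∈ {i | 1 ≤ mult f i ∧ b ≤ i ∧ i ≤ a}, x ≤ a :=
        fun x hx => hx.2.2
      have hfirst : f (nGT f a + 1) ∈ {i | 1 ≤ mult f i ∧ b ≤ i ∧ i ≤ a} := by
        rw [first_occ hm hB ((mult_pos_iff hB (by omega)).mp hma)]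
        exact ⟨hma, le_of_lt hp.1, le_refl a⟩
      have hj := least_eq hm hB htop hfirst hle
      have hEv : Even ((OddSet f ∩ Set.Ioi a).ncard) := hp.2.2.2.1
      have := parityN hm hB a
      rw [Nat.even_iff] at hEv
      rw [Nat.odd_iff]
      omega
    · have hi1 : 1 ≤ i := hmultpos hmi
      have htop : ∀ x ∈ ({i} : Set ℕ), x ≤ i := by
        intro x hx
        simp only [Set.mem_singleton_iff] at hx
        omega
      have hfirst : f (nGT f i + 1) ∈ ({i} : Set ℕ) := by
        simp [first_occ hm hB ((mult_pos_iff hB hi1).mp hmi)]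
      have hj := least_eq hm hB htop hfirst hle
      have hEv := (noPairEven i hnp).1
      have := parityN hm hB i
      rw [Nat.even_iff] at hEv
      rw [Nat.odd_iff]
      omega
  · -- Geven
    rintro j ⟨Δ, hΔ, hge⟩
    rcases hΔ with ⟨a, b, hp, rfl⟩ | ⟨i, hie, hmi, hnp, rfl⟩
    · obtain ⟨hapar, hma, hb1, hmb⟩ := pairedOE_facts hm hB h2o hp
      have hbot : ∀ x ∈ {i | 1 ≤ mult f i ∧ b ≤ i ∧ i ≤ a}, b ≤ x :=
        fun x hx => hx.2.1
      have hbΔ : b ∈ {i | 1 ≤ mult f i ∧ b ≤ i ∧ i ≤ a} :=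
        ⟨hmb, le_refl b, le_of_lt hp.1⟩
      have hj := greatest_eq hm hB hb1 hbot hbΔ hmb hge
      have hEv : Even ((OddSet f ∩ Set.Ioi a).ncard) := hp.2.2.2.1
      have hsplit := ncard_two_split hOfin hb1 hp.1 hp.2.1 hp.2.2.1 hp.2.2.2.2
      have := parityN hm hB (b-1)
      rw [Nat.even_iff] at hEv
      rw [Nat.even_iff]
      omega
    · have hi1 : 1 ≤ i := hmultpos hmi
      have hbot : ∀ x ∈ ({i} : Set ℕ), i ≤ x := by
        intro x hx
        simp only [Set.mem_singleton_iff] at hx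
        omega
      have hj := greatest_eq hm hB hi1 hbot rfl hmi hge
      obtain ⟨hEv, hiO⟩ := noPairEven i hnp
      have hskip := ncard_skip hi1 hiO
      have := parityN hm hB (i-1)
      rw [hskip] at this
      rw [Nat.even_iff] at hEv
      rw [Nat.even_iff]
      omega
  · -- vz
    intro j hj
    rcases Nat.eq_zero_or_pos (f j) with h | h
    · exact Or.inl h
    · exact Or.inr ((mult_pos_iff hB h).mpr ⟨j, hj, rfl⟩)

end Iface2

/-- Inequalities (1) and (2) in the proof of Proposition 1.9. -/
theorem stmt4 (n1 n2 : ℕ)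
    (f1 : ℕ → ℕ) (h1 : IsPartition f1 (2*n1)) (h1s : Symp f1) (h1sp : SpecialPairs f1)
    (f2 : ℕ → ℕ) (h2 : IsPartition f2 (2*n2)) (h2o : Orth f2) (h2sp : SpecialPairs f2)
    (g : ℕ → ℕ)
    (hg : ∀ j, 1 ≤ j → (g j : ℤ) = (f1 j : ℤ) + (f2 j : ℤ) + xi f1 f2 j)
    (l : ℕ) (hl : ∀ j, 1 ≤ j → (g j ≠ 0 ↔ j ≤ l)) :
    ∀ k, 1 ≤ k →
      Sz (xi f1 f2) k ≤ Sz (zetaS f1) k + Sz (zetaOE f2) k ∧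
      (l < k → Sz (xi f1 f2) k + 1 ≤ Sz (zetaS f1) k + Sz (zetaOE f2) k) := by
  classical
  obtain ⟨B1, hB1⟩ := h1.fin
  obtain ⟨B2, hB2⟩ := h2.fin
  have hm1 := h1.mono
  have hm2 := h2.mono
  have if1 : Iface f1 (IsIntervalS f1) Even := iface1 hm1 hB1 h1s h1sp
  have if2 : Iface f2 (IsIntervalOE f2) Odd := iface2 hm2 hB2 h2o h2sp
  set L1 := Lop f1 (IsIntervalS f1) with hL1def
  set G1 := Gop f1 (IsIntervalS f1) with hG1def
  set L2 := Lop f2 (IsIntervalOE f2) with hL2def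
  set G2 := Gop f2 (IsIntervalOE f2) with hG2def
  have hz1 : ∀ j, zetaS f1 j = if L1 j then 1 else if G1 j then (-1 : ℤ) else 0 :=
    fun j => rfl
  have hz2 : ∀ j, zetaOE f2 j = if L2 j then 1 else if G2 j then (-1 : ℤ) else 0 :=
    fun j => rfl
  have hV1 := abs_V if1 (zetaS f1) hz1
  have hV2 := abs_V if2 (zetaOE f2) hz2
  set ξ := xi f1 f2 with hξdef
  -- values of ξ
  have hxi_odd : ∀ j, 1 ≤ j → Odd j →
      ξ j = if (Even (f1 j) ∧ Odd (f2 j)) ∧ (L1 j ∨ L2 j) then 1 else 0 := by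
    intro j hj hodd
    rw [hξdef]
    show (if j ∈ JplusSet f1 f2 then (1:ℤ) else if j ∈ JminusSet f1 f2 then -1 else 0) = _
    by_cases hp : j ∈ JplusSet f1 f2
    · rw [if_pos hp]
      obtain ⟨_, h2', h3', h4'⟩ := hp
      rw [if_pos ⟨⟨h2', h3'⟩, h4'⟩]
    · rw [if_neg hp]
      have hmn : j ∉ JminusSet f1 f2 := by
        intro hmm
        obtain ⟨_, _, _, hG⟩ := hmm
        have hev : Even j := by
          rcases hG with hG | hG
          · exact if1.Geven hG
          · exact if2.Geven hG
        rw [Nat.even_iff] at hev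
        rw [Nat.odd_iff] at hodd
        omega
      rw [if_neg hmn, if_neg (fun hc => hp ⟨hj, hc.1.1, hc.1.2, hc.2⟩)]
  have hxi_even : ∀ j, 1 ≤ j → Even j →
      ξ j = if (Even (f1 j) ∧ Odd (f2 j)) ∧ (G1 j ∨ G2 j) then -1 else 0 := by
    intro j hj hevj
    rw [hξdef]
    show (if j ∈ JplusSet f1 f2 then (1:ℤ) else if j ∈ JminusSet f1 f2 then -1 else 0) = _
    have hnp : j ∉ JplusSet f1 f2 := by
      intro hp
      obtain ⟨_, _, _, hL⟩ := hp
      have hodd : Odd j := by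
        rcases hL with hL | hL
        · exact if1.Lodd hL
        · exact if2.Lodd hL
      rw [Nat.even_iff] at hevj
      rw [Nat.odd_iff] at hodd
      omega
    rw [if_neg hnp]
    by_cases hmm : j ∈ JminusSet f1 f2
    · rw [if_pos hmm]
      obtain ⟨_, h2', h3', h4'⟩ := hmm
      rw [if_pos ⟨⟨h2', h3'⟩, h4'⟩]
    · rw [if_neg hmm, if_neg (fun hc => hmm ⟨hj, hc.1.1, hc.1.2, hc.2⟩)]
  have hxi_bnd : ∀ j, -1 ≤ ξ j ∧ ξ j ≤ 1 := by
    intro j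
    rw [hξdef]
    show -1 ≤ (if j ∈ JplusSet f1 f2 then (1:ℤ) else if j ∈ JminusSet f1 f2 then -1 else 0)
      ∧ (if j ∈ JplusSet f1 f2 then (1:ℤ) else if j ∈ JminusSet f1 f2 then -1 else 0) ≤ 1
    split_ifs <;> norm_num
  have hSzstep : ∀ (z : ℕ → ℤ) (k : ℕ), Sz z (k+1) = Sz z k + z (k+1) :=
    fun z k => Finset.sum_Icc_succ_top (by omega) z
  have hSz0 : ∀ z : ℕ → ℤ, Sz z 0 = 0 := by
    intro z
    rw [Sz, Finset.Icc_eq_empty (by omega), Finset.sum_empty]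
  -- pair-parity transfer
  have hpair : ∀ t : ℕ, ((Even (f1 (2*t+1)) ∧ Odd (f2 (2*t+1))) ↔
      (Even (f1 (2*t+2)) ∧ Odd (f2 (2*t+2)))) := by
    intro t
    have hs1 := h1sp (t+1) (by omega)
    have hs2 := h2sp (t+1) (by omega)
    rw [show 2*(t+1) - 1 = 2*t+1 by omega, show 2*(t+1) = 2*t+2 by omega] at hs1 hs2
    simp only [Nat.even_iff, Nat.odd_iff]
    omega
  -- a new interval can only start right after one ends
  have hstart : ∀ t : ℕ, 1 ≤ t → (Even (f1 (2*t)) ∧ Odd (f2 (2*t))) →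
      (L1 (2*t+1) ∨ L2 (2*t+1)) → (G1 (2*t) ∨ G2 (2*t)) := by
    intro t ht hP hL
    rcases hL with hL | hL
    · exact Or.inl (abs_5d if1 (by omega) hP.1 hL)
    · exact Or.inr (abs_5d if2 (by omega) hP.2 hL)
  -- when the parity condition dies, an interval ends
  have hbridge : ∀ t : ℕ, 1 ≤ t → (Even (f1 (2*t)) ∧ Odd (f2 (2*t))) →
      ¬(Even (f1 (2*t+1)) ∧ Odd (f2 (2*t+1))) → (G1 (2*t) ∨ G2 (2*t)) := by
    intro t ht hP hnP
    by_cases hE : Even (f1 (2*t+1))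
    · have hO : ¬ Odd (f2 (2*t+1)) := fun h => hnP ⟨hE, h⟩
      exact Or.inr (abs_5b if2 (by omega) hP.2 hO)
    · exact Or.inl (abs_5b if1 (by omega) hP.1 hE)
  -- the main invariant
  have inv : ∀ t : ℕ, Sz ξ (2*t) ≤ 1 ∧
      (¬ (Even (f1 (2*t)) ∧ Odd (f2 (2*t))) → Sz ξ (2*t) ≤ 0) ∧
      ((G1 (2*t) ∨ G2 (2*t)) → Sz ξ (2*t) ≤ 0) := by
    intro t
    induction t with
    | zero =>
      rw [show 2*0 = 0 by omega, hSz0]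
      exact ⟨by omega, fun _ => by omega, fun _ => by omega⟩
    | succ t ih =>
      have e1 : Sz ξ (2*t+1) = Sz ξ (2*t) + ξ (2*t+1) := hSzstep ξ (2*t)
      have e2 : Sz ξ (2*t+2) = Sz ξ (2*t+1) + ξ (2*t+2) := hSzstep ξ (2*t+1)
      have hx1 := hxi_odd (2*t+1) (by omega) (by rw [Nat.odd_iff]; omega)
      have hx2 := hxi_even (2*t+2) (by omega) (by rw [Nat.even_iff]; omega)
      -- if no parity condition at 2t+1, the partial sum up to 2t is ≤ 0
      have haux0 : ¬(Even (f1 (2*t+1)) ∧ Odd (f2 (2*t+1))) → Sz ξ (2*t) ≤ 0 := by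
        intro hnP
        rcases Nat.eq_zero_or_pos t with ht0 | ht1
        · subst ht0
          rw [show 2*0 = 0 by omega, hSz0]
        · by_cases hP : Even (f1 (2*t)) ∧ Odd (f2 (2*t))
          · exact ih.2.2 (hbridge t ht1 hP hnP)
          · exact ih.2.1 hP
      -- partial sums up to 2t+1 are at most 1
      have haux1 : Sz ξ (2*t) + ξ (2*t+1) ≤ 1 := by
        by_cases hc : (Even (f1 (2*t+1)) ∧ Odd (f2 (2*t+1))) ∧ (L1 (2*t+1) ∨ L2 (2*t+1))
        · have hval : ξ (2*t+1) = 1 := by rw [hx1, if_pos hc]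
          have hle : Sz ξ (2*t) ≤ 0 := by
            rcases Nat.eq_zero_or_pos t with ht0 | ht1
            · subst ht0
              rw [show 2*0 = 0 by omega, hSz0]
            · by_cases hP : Even (f1 (2*t)) ∧ Odd (f2 (2*t))
              · exact ih.2.2 (hstart t ht1 hP hc.2)
              · exact ih.2.1 hP
          omega
        · have hval : ξ (2*t+1) = 0 := by rw [hx1, if_neg hc]
          have := ih.1
          omega
      have hx2le : ξ (2*t+2) ≤ 0 := by
        rw [hx2]
        split_ifs <;> omega
      rw [show 2*(t+1) = 2*t+2 by omega]
      refine ⟨by omega, ?_, ?_⟩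
      · -- no parity condition at the end of pair t+1
        intro hnP2
        have hnP1 : ¬(Even (f1 (2*t+1)) ∧ Odd (f2 (2*t+1))) := fun h =>
          hnP2 ((hpair t).mp h)
        have hv1 : ξ (2*t+1) = 0 := by
          rw [hx1, if_neg (fun hc => hnP1 hc.1)]
        have := haux0 hnP1
        omega
      · -- an interval ends at 2t+2
        intro hG
        by_cases hP2 : Even (f1 (2*t+2)) ∧ Odd (f2 (2*t+2))
        · have hv2 : ξ (2*t+2) = -1 := by rw [hx2, if_pos ⟨hP2, hG⟩]
          omega
        · have hnP1 : ¬(Even (f1 (2*t+1)) ∧ Odd (f2 (2*t+1))) := fun h =>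
            hP2 ((hpair t).mp h)
          have hv1 : ξ (2*t+1) = 0 := by
            rw [hx1, if_neg (fun hc => hnP1 hc.1)]
          have := haux0 hnP1
          omega
  -- partial sums are nonpositive whenever the parity condition fails
  have hSle0 : ∀ k, 1 ≤ k → ¬(Even (f1 k) ∧ Odd (f2 k)) → Sz ξ k ≤ 0 := by
    intro k hk hnP
    rcases Nat.even_or_odd k with hev | hodd
    · obtain ⟨t, rfl⟩ : ∃ t, k = 2*t := ⟨k/2, by rw [Nat.even_iff] at hev; omega⟩
      exact (inv t).2.1 hnP
    · obtain ⟨t, rfl⟩ : ∃ t, k = 2*t+1 := ⟨k/2, by rw [Nat.odd_iff] at hodd; omega⟩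
      have e1 : Sz ξ (2*t+1) = Sz ξ (2*t) + ξ (2*t+1) := hSzstep ξ (2*t)
      have hv1 : ξ (2*t+1) = 0 := by
        rw [hxi_odd (2*t+1) (by omega) (by rw [Nat.odd_iff]; omega),
          if_neg (fun hc => hnP hc.1)]
      have hle : Sz ξ (2*t) ≤ 0 := by
        rcases Nat.eq_zero_or_pos t with ht0 | ht1
        · subst ht0
          rw [show 2*0 = 0 by omega, hSz0]
        · by_cases hP : Even (f1 (2*t)) ∧ Odd (f2 (2*t))
          · exact (inv t).2.2 (hbridge t ht1 hP hnP)
          · exact (inv t).2.1 hP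
      omega
  -- no interval of f1 ends at an index where f1 vanishes
  have hG0 : ∀ j, f1 j = 0 → ¬ G1 j := by
    rintro j hfj ⟨Δ, hΔ, hge⟩
    apply no_greatest_of_zero hB1 _ hge
    have : f1 j ∈ Δ := (mem_Jset.mp hge.1).2
    rwa [hfj] at this
  -- the two ζ-sums are nonnegative, with explicit values
  intro k hk
  have hV1k := hV1 k
  have hV2k := hV2 k
  have hζ1nn : 0 ≤ Sz (zetaS f1) k := by rw [hV1k]; split_ifs <;> omega
  have hζ2nn : 0 ≤ Sz (zetaOE f2) k := by rw [hV2k]; split_ifs <;> omega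
  constructor
  · -- inequality (1)
    by_cases hPk : Even (f1 k) ∧ Odd (f2 k)
    · rcases Nat.even_or_odd k with hev | hodd
      · obtain ⟨t, rfl⟩ : ∃ t, k = 2*t := ⟨k/2, by rw [Nat.even_iff] at hev; omega⟩
        by_cases hG : G1 (2*t) ∨ G2 (2*t)
        · have := (inv t).2.2 hG
          omega
        · push_neg at hG
          have hv1 : Sz (zetaS f1) (2*t) = 1 := by
            rw [hV1k, if_pos ⟨hk, hPk.1, hG.1⟩]
          have hv2 : Sz (zetaOE f2) (2*t) = 1 := by
            rw [hV2k, if_pos ⟨hk, hPk.2, hG.2⟩]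
          have := (inv t).1
          omega
      · obtain ⟨t, rfl⟩ : ∃ t, k = 2*t+1 := ⟨k/2, by rw [Nat.odd_iff] at hodd; omega⟩
        have e1 : Sz ξ (2*t+1) = Sz ξ (2*t) + ξ (2*t+1) := hSzstep ξ (2*t)
        have hnG1 : ¬ G1 (2*t+1) := by
          intro hG
          have := if1.Geven hG
          rw [Nat.even_iff] at this
          omega
        have hnG2 : ¬ G2 (2*t+1) := by
          intro hG
          have := if2.Geven hG
          rw [Nat.even_iff] at this
          omega
        have hv1 : Sz (zetaS f1) (2*t+1) = 1 := by
          rw [hV1k, if_pos ⟨hk, hPk.1, hnG1⟩]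
        have hv2 : Sz (zetaOE f2) (2*t+1) = 1 := by
          rw [hV2k, if_pos ⟨hk, hPk.2, hnG2⟩]
        have hb := (hxi_bnd (2*t+1)).2
        have := (inv t).1
        omega
    · have := hSle0 k hk hPk
      omega
  · -- inequality (2)
    intro hlk
    have hgk0 : g k = 0 := by
      by_contra hc
      have := (hl k hk).mp hc
      omega
    have hgeq := hg k hk
    rw [hgk0] at hgeq
    push_cast at hgeq
    have hbnd := hxi_bnd k
    by_cases hxik : ξ k = -1
    · -- ξ k = -1 : f1 k = 0, f2 k = 1, an interval of f2 ends at k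
      have hmem : k ∈ JminusSet f1 f2 := by
        have : ξ k = if k ∈ JplusSet f1 f2 then (1:ℤ)
            else if k ∈ JminusSet f1 f2 then -1 else 0 := rfl
        rw [hxik] at this
        by_cases hp : k ∈ JplusSet f1 f2
        · rw [if_pos hp] at this; omega
        · rw [if_neg hp] at this
          by_cases hq : k ∈ JminusSet f1 f2
          · exact hq
          · rw [if_neg hq] at this; omega
      obtain ⟨_, hE1, hO2, hGG⟩ := hmem
      have hO2' : f2 k % 2 = 1 := Nat.odd_iff.mp hO2
      have hf1k : f1 k = 0 ∧ f2 k = 1 := by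
        rw [hxik] at hgeq
        constructor <;> omega
      have hG2k : G2 k := by
        rcases hGG with hG | hG
        · exact absurd hG (hG0 k hf1k.1)
        · exact hG
      have hkev : Even k := if2.Geven hG2k
      obtain ⟨t, rfl⟩ : ∃ t, k = 2*t := ⟨k/2, by rw [Nat.even_iff] at hkev; omega⟩
      have hle := (inv t).2.2 (Or.inr hG2k)
      have hv1 : Sz (zetaS f1) (2*t) = 1 := by
        rw [hV1k, if_pos ⟨hk, by rw [hf1k.1]; exact Even.zero, hG0 (2*t) hf1k.1⟩]
      omega
    · -- otherwise f1 k = f2 k = 0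
      have hxi0 : ξ k = 0 ∧ f1 k = 0 ∧ f2 k = 0 := by
        have hne1 : ξ k ≠ 1 := by
          intro h
          rw [h] at hgeq
          omega
        have hz : ξ k = 0 := by
          rcases hbnd with ⟨hb1, hb2⟩
          omega
        refine ⟨hz, ?_⟩
        rw [hz] at hgeq
        constructor <;> omega
      have hnP : ¬ (Even (f1 k) ∧ Odd (f2 k)) := by
        rintro ⟨_, hO⟩
        rw [hxi0.2.2] at hO
        rw [Nat.odd_iff] at hO
        omega
      have hle := hSle0 k hk hnP
      have hv1 : Sz (zetaS f1) k = 1 := by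
        rw [hV1k, if_pos ⟨hk, by rw [hxi0.2.1]; exact Even.zero, hG0 k hxi0.2.1⟩]
      omega

end Wald
end

section
/- Let n_1, n_2 be nonnegative integers, λ1 a special symplectic partition of 2n_1 and λ2 a special orthogonal partition of 2n_2. Then every element of J^+ is odd, every element of J^− is even, J^+ and J^− are finite sets with the same cardinality r, and writing J^+ = {j_1^+ < … < j_r^+} and J^− = {j_1^− < … < j_r^−}, one has the interleaving j_1^+ < j_1^− < j_2^+ < j_2^− < … < j_r^+ < j_r^−. -/
open Classical

namespace Wald

section Aux

lemma even_iff_mod2 (n : ℕ) : Even n ↔ n % 2 = 0 := Nat.even_iff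

lemma mult_zero_eq (f : ℕ → ℕ) {M : ℕ} (hM : ∀ j, M < j → f j = 0) : mult f 0 = 0 := by
  have hinf : {j : ℕ | 1 ≤ j ∧ f j = 0}.Infinite := by
    apply Set.Infinite.mono (s := Set.Ioi M) _ (Set.Ioi_infinite M)
    intro j hj
    exact ⟨by simp at hj; omega, hM j hj⟩
  exact hinf.ncard

lemma mult_set_finite (f : ℕ → ℕ) {M : ℕ} (hM : ∀ j, M < j → f j = 0) {i : ℕ} (hi : 1 ≤ i) :
    {j : ℕ | 1 ≤ j ∧ f j = i}.Finite := by
  apply Set.Finite.subset (Set.finite_Icc 1 M)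
  intro j hj
  obtain ⟨h1, h2⟩ := hj
  simp only [Set.mem_Icc]
  refine ⟨h1, ?_⟩
  by_contra h
  have := hM j (by omega)
  omega

lemma mult_eq_card (f : ℕ → ℕ) {M : ℕ} (hM : ∀ j, M < j → f j = 0) {i : ℕ} (hi : 1 ≤ i) :
    mult f i = ((Finset.Icc 1 M).filter (fun j => f j = i)).card := by
  have hset : {j : ℕ | 1 ≤ j ∧ f j = i} = ↑((Finset.Icc 1 M).filter (fun j => f j = i)) := by
    ext j
    simp only [Set.mem_setOf_eq, Finset.coe_filter, Finset.mem_Icc]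
    constructor
    · rintro ⟨h1, h2⟩
      refine ⟨⟨h1, ?_⟩, h2⟩
      by_contra h
      have := hM j (by omega)
      omega
    · rintro ⟨⟨h1, _⟩, h2⟩
      exact ⟨h1, h2⟩
  rw [mult, hset, Set.ncard_coe_finset]

lemma mult_pos_of_attained (f : ℕ → ℕ) {M : ℕ} (hM : ∀ j, M < j → f j = 0) {j i : ℕ}
    (hj : 1 ≤ j) (hfj : f j = i) (hi : 1 ≤ i) : 1 ≤ mult f i := by
  have hfin := mult_set_finite f hM hi
  have : 0 < mult f i := by
    rw [mult, Set.ncard_pos hfin]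
    exact ⟨j, hj, hfj⟩
  omega

lemma attained_of_mult_pos (f : ℕ → ℕ) {i : ℕ} (h : 1 ≤ mult f i) :
    ∃ j, 1 ≤ j ∧ f j = i := by
  have := Set.nonempty_of_ncard_ne_zero (s := {j : ℕ | 1 ≤ j ∧ f j = i}) (by
    unfold mult at h; omega)
  obtain ⟨j, hj⟩ := this
  exact ⟨j, hj.1, hj.2⟩

lemma mult_pos_ge_one (f : ℕ → ℕ) {M : ℕ} (hM : ∀ j, M < j → f j = 0) {i : ℕ}
    (h : 1 ≤ mult f i) : 1 ≤ i := by
  rcases Nat.eq_zero_or_pos i with h0 | h1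
  · rw [h0, mult_zero_eq f hM] at h; omega
  · exact h1

lemma le_top_of_mult_pos {f : ℕ → ℕ} {N : ℕ} (h : IsPartition f N) {i : ℕ}
    (hm : 1 ≤ mult f i) : i ≤ f 1 := by
  obtain ⟨j, hj, hfj⟩ := attained_of_mult_pos f hm
  have := h.mono le_rfl hj
  omega

lemma downset_eq_Icc (S : Finset ℕ) (h0 : 0 ∉ S)
    (hdc : ∀ j ∈ S, ∀ k, 1 ≤ k → k ≤ j → k ∈ S) : S = Finset.Icc 1 S.card := by
  rcases S.eq_empty_or_nonempty with he | hne
  · simp [he]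
  · have hS : S = Finset.Icc 1 (S.max' hne) := by
      ext j
      simp only [Finset.mem_Icc]
      constructor
      · intro hj
        refine ⟨?_, S.le_max' j hj⟩
        rcases Nat.eq_zero_or_pos j with h | h
        · exact absurd (h ▸ hj) h0
        · exact h
      · rintro ⟨h1, h2⟩
        exact hdc _ (S.max'_mem hne) j h1 h2
    have hcard : S.card = S.max' hne := by
      conv_lhs => rw [hS]
      rw [Nat.card_Icc]; omega
    rw [hcard]
    exact hS

lemma count_fiber {f : ℕ → ℕ} {N : ℕ} (h : IsPartition f N) {M : ℕ}
    (hM : ∀ j, M < j → f j = 0) (P : ℕ → Prop) [DecidablePred P] (hP0 : ¬ P 0) :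
    ((Finset.Icc 1 M).filter (fun j => P (f j))).card
      = ∑ i ∈ (Finset.Icc 1 (f 1)).filter P, mult f i := by
  rw [Finset.card_eq_sum_card_fiberwise (f := fun j => f j)
      (t := (Finset.Icc 1 (f 1)).filter P)]
  · apply Finset.sum_congr rfl
    intro i hi
    simp only [Finset.mem_filter, Finset.mem_Icc] at hi
    rw [mult_eq_card f hM hi.1.1]
    congr 1
    rw [Finset.filter_filter]
    apply Finset.filter_congr
    intro j _
    constructor
    · rintro ⟨_, h2⟩; exact h2
    · intro h2; exact ⟨h2 ▸ hi.2, h2⟩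
  · intro j hj
    simp only [Finset.mem_coe, Finset.mem_filter, Finset.mem_Icc] at hj ⊢
    obtain ⟨⟨hj1, hjM⟩, hPj⟩ := hj
    have hne : f j ≠ 0 := fun h => hP0 (h ▸ hPj)
    exact ⟨⟨by omega, h.mono le_rfl hj1⟩, hPj⟩

lemma even_sum_iff (t : Finset ℕ) (g : ℕ → ℕ) :
    Even (∑ i ∈ t, g i) ↔ Even ((t.filter (fun i => Odd (g i))).card) := by
  classical
  induction t using Finset.induction_on with
  | empty => simp
  | @insert a s ha ih =>
    rw [Finset.sum_insert ha, Finset.filter_insert]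
    by_cases hg : Odd (g a)
    · rw [if_pos hg, Finset.card_insert_of_notMem (by simp [ha])]
      rw [Nat.even_add, Nat.even_add_one]
      rw [Nat.odd_iff] at hg
      rw [Nat.even_iff, hg]
      simp only [ih]
      tauto
    · rw [if_neg hg, Nat.even_add]
      rw [Nat.odd_iff] at hg
      have heven : Even (g a) := by rw [Nat.even_iff]; omega
      simp [heven, ih]

end Aux
section Threshold

lemma Ioi_eq_Ici (w : ℕ) : Set.Ioi w = Set.Ici (w+1) := by
  ext x; simp [Set.mem_Ioi, Set.mem_Ici]

/-- threshold + parity lemma -/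
lemma PL {f : ℕ → ℕ} {N : ℕ} (h : IsPartition f N) {M : ℕ}
    (hM : ∀ j, M < j → f j = 0) {x : ℕ} (hx : 1 ≤ x) :
    ∃ c, (∀ j, 1 ≤ j → (x ≤ f j ↔ j ≤ c)) ∧
      (Even c ↔ Even ((OddSet f ∩ Set.Ici x).ncard)) := by
  classical
  set T := (Finset.Icc 1 M).filter (fun j => x ≤ f j) with hT
  have h0 : (0 : ℕ) ∉ T := by simp [hT]
  have hdc : ∀ j ∈ T, ∀ k, 1 ≤ k → k ≤ j → k ∈ T := by
    intro j hj k hk1 hkj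
    simp only [hT, Finset.mem_filter, Finset.mem_Icc] at hj ⊢
    exact ⟨⟨hk1, le_trans hkj hj.1.2⟩, le_trans hj.2 (h.mono hk1 hkj)⟩
  have hTicc := downset_eq_Icc T h0 hdc
  refine ⟨T.card, ?_, ?_⟩
  · intro j hj
    constructor
    · intro hfj
      have hjT : j ∈ T := by
        simp only [hT, Finset.mem_filter, Finset.mem_Icc]
        refine ⟨⟨hj, ?_⟩, hfj⟩
        by_contra hc
        have := hM j (by omega); omega
      rw [hTicc] at hjT
      simp only [Finset.mem_Icc] at hjT
      exact hjT.2
    · intro hjc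
      have : j ∈ T := by rw [hTicc]; simp only [Finset.mem_Icc]; exact ⟨hj, hjc⟩
      simp only [hT, Finset.mem_filter] at this
      exact this.2
  · have hcf := count_fiber h hM (fun v => x ≤ v) (by omega)
    have : T.card = ∑ i ∈ (Finset.Icc 1 (f 1)).filter (fun v => x ≤ v), mult f i := hcf
    rw [this, even_sum_iff]
    have hseteq : (OddSet f ∩ Set.Ici x)
        = ↑(((Finset.Icc 1 (f 1)).filter (fun v => x ≤ v)).filter (fun i => Odd (mult f i))) := by
      ext i
      simp only [Set.mem_inter_iff, OddSet, Set.mem_setOf_eq, Set.mem_Ici,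
        Finset.coe_filter, Finset.mem_filter, Finset.mem_Icc]
      constructor
      · rintro ⟨hodd, hxi⟩
        have hm1 : 1 ≤ mult f i := by
          rcases hodd with ⟨k, hk⟩; omega
        exact ⟨⟨⟨by omega, le_top_of_mult_pos h hm1⟩, hxi⟩, hodd⟩
      · rintro ⟨⟨_, hxi⟩, hodd⟩
        exact ⟨hodd, hxi⟩
    rw [hseteq, Set.ncard_coe_finset]

/-- alignment: for a parity-respecting predicate, counts over `[1, 2m]` are even -/
lemma align {f : ℕ → ℕ} (hsp : SpecialPairs f) (p : ℕ → Prop) [DecidablePred p]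
    (hp : ∀ a b : ℕ, a % 2 = b % 2 → (p a ↔ p b)) (m : ℕ) :
    Even (((Finset.Icc 1 (2*m)).filter (fun j => p (f j))).card) := by
  induction m with
  | zero => simp
  | succ m ih =>
    have hicc : Finset.Icc 1 (2*(m+1)) = insert (2*m+1) (insert (2*m+2) (Finset.Icc 1 (2*m))) := by
      ext j
      simp only [Finset.mem_Icc, Finset.mem_insert]
      omega
    have hind : p (f (2*m+1)) ↔ p (f (2*m+2)) := by
      have hh := hsp (m+1) (by omega)
      rw [show 2*(m+1)-1 = 2*m+1 by omega, show 2*(m+1) = 2*m+2 by omega] at hh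
      exact hp _ _ hh
    rw [hicc, Finset.filter_insert, Finset.filter_insert]
    by_cases hp1 : p (f (2*m+1))
    · rw [if_pos hp1, if_pos (hind.mp hp1)]
      rw [Finset.card_insert_of_notMem (by
        simp only [Finset.mem_insert, Finset.mem_filter, Finset.mem_Icc]
        push_neg
        constructor
        · omega
        · intro h; omega)]
      rw [Finset.card_insert_of_notMem (by
        simp only [Finset.mem_filter, Finset.mem_Icc]
        push_neg
        intro h; omega)]
      rw [Nat.even_iff] at ih ⊢
      omega
    · rw [if_neg hp1, if_neg (fun hc => hp1 (hind.mpr hc))]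
      exact ih

end Threshold
section CC

/-- unified "alignment" core lemma: values satisfying `q` (a parity class with even
multiplicities) have an even number of odd-multiplicity values above them. -/
lemma Ccore {f : ℕ → ℕ} {N : ℕ} (h : IsPartition f N) (hsp : SpecialPairs f)
    (q : ℕ → Prop) [DecidablePred q]
    (hqp : ∀ a b : ℕ, a % 2 = b % 2 → (q a ↔ q b))
    (hq : ∀ i, 1 ≤ i → q i → Even (mult f i))
    {w : ℕ} (hw : q w) (hmw : 1 ≤ mult f w) :
    Even ((OddSet f ∩ Set.Ioi w).ncard) := by
  classical
  obtain ⟨M, hM⟩ := h.fin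
  have hw1 : 1 ≤ w := mult_pos_ge_one f hM hmw
  -- least index attaining w
  obtain ⟨j0, hj01, hj0w⟩ := attained_of_mult_pos f hmw
  set A := {j : ℕ | 1 ≤ j ∧ f j = w} with hA
  have hAne : A.Nonempty := ⟨j0, hj01, hj0w⟩
  set s := sInf A with hsdef
  have hsA : s ∈ A := Nat.sInf_mem hAne
  have hs1 : 1 ≤ s := hsA.1
  have hfs : f s = w := hsA.2
  have hgt : ∀ j, 1 ≤ j → j < s → w + 1 ≤ f j := by
    intro j hj1 hjs
    have h1 : w ≤ f j := hfs ▸ h.mono hj1 (le_of_lt hjs)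
    have h2 : f j ≠ w := by
      intro hc
      have := Nat.sInf_le (show j ∈ A from ⟨hj1, hc⟩)
      omega
    omega
  have hle : ∀ j, s ≤ j → f j ≤ w := fun j hj => hfs ▸ h.mono hs1 hj
  obtain ⟨c, hc, hpar⟩ := PL h hM (x := w+1) (by omega)
  have hcs : c = s - 1 := by
    have h1 : c ≤ s - 1 := by
      rcases Nat.eq_zero_or_pos c with h0 | h0
      · omega
      · have := (hc c h0).mpr le_rfl
        have := hle c
        omega
    have h2 : s - 1 ≤ c := by
      rcases Nat.eq_zero_or_pos (s-1) with h0 | h0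
      · omega
      · have := (hc (s-1) h0).mp (hgt (s-1) h0 (by omega))
        omega
    omega
  -- s is odd
  have hsodd : s % 2 = 1 := by
    by_contra hse
    have hse' : s % 2 = 0 := by omega
    obtain ⟨m, hm⟩ : ∃ m, s = 2 * m := ⟨s / 2, by omega⟩
    have hL := align hsp q hqp (f := f) m
    rw [← hm] at hL
    -- decompose Icc 1 s
    have hicc : Finset.Icc 1 s = insert s (Finset.Icc 1 (s-1)) := by
      ext j; simp only [Finset.mem_Icc, Finset.mem_insert]; omega
    have hK : ((Finset.Icc 1 (s-1)).filter (fun j => q (f j)))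
        = ((Finset.Icc 1 M).filter (fun j => w + 1 ≤ f j ∧ q (f j))) := by
      ext j
      simp only [Finset.mem_filter, Finset.mem_Icc]
      constructor
      · rintro ⟨⟨hj1, hjs⟩, hqj⟩
        have hfj := hgt j hj1 (by omega)
        refine ⟨⟨hj1, ?_⟩, hfj, hqj⟩
        by_contra hcj
        have := hM j (by omega); omega
      · rintro ⟨⟨hj1, _⟩, hfj, hqj⟩
        have : j < s := by
          by_contra hcj
          have := hle j (by omega); omega
        exact ⟨⟨hj1, by omega⟩, hqj⟩
    have hKval := count_fiber h hM (fun v => w + 1 ≤ v ∧ q v) (by omega)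
    have hKeven : Even (((Finset.Icc 1 (s-1)).filter (fun j => q (f j))).card) := by
      rw [hK, hKval]
      apply Finset.even_sum
      intro i hi
      simp only [Finset.mem_filter, Finset.mem_Icc] at hi
      exact hq i (by omega) hi.2.2
    have hLK : ((Finset.Icc 1 s).filter (fun j => q (f j))).card
        = ((Finset.Icc 1 (s-1)).filter (fun j => q (f j))).card + 1 := by
      rw [hicc, Finset.filter_insert, if_pos (hfs ▸ hw)]
      rw [Finset.card_insert_of_notMem (by
        simp only [Finset.mem_filter, Finset.mem_Icc]
        push_neg
        intro hj; omega)]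
    rw [hLK] at hL
    rw [Nat.even_iff] at hL hKeven
    omega
  have hceven : Even c := by rw [Nat.even_iff]; omega
  rw [Ioi_eq_Ici]
  exact hpar.mp hceven

lemma C1 {f : ℕ → ℕ} {N : ℕ} (h : IsPartition f N) (hs : Symp f) (hsp : SpecialPairs f)
    {w : ℕ} (hw : Odd w) (hmw : 1 ≤ mult f w) :
    Even ((OddSet f ∩ Set.Ioi w).ncard) := by
  apply Ccore h hsp Odd _ _ hw hmw
  · intro a b hab; rw [Nat.odd_iff, Nat.odd_iff]; omega
  · intro i _ hi; exact hs i hi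

lemma C2 {f : ℕ → ℕ} {N : ℕ} (h : IsPartition f N) (ho : Orth f) (hsp : SpecialPairs f)
    {w : ℕ} (hw : Even w) (hmw : 1 ≤ mult f w) :
    Even ((OddSet f ∩ Set.Ioi w).ncard) := by
  apply Ccore h hsp Even _ _ hw hmw
  · intro a b hab; rw [Nat.even_iff, Nat.even_iff]; omega
  · intro i hi1 hi; exact ho i hi hi1

lemma zero_not_mem_oddSet {f : ℕ → ℕ} {N : ℕ} (h : IsPartition f N) : 0 ∉ OddSet f := by
  obtain ⟨M, hM⟩ := h.fin
  simp only [OddSet, Set.mem_setOf_eq, mult_zero_eq f hM]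
  decide

lemma oddSet_subset {f : ℕ → ℕ} {N : ℕ} (h : IsPartition f N) :
    OddSet f ⊆ Set.Icc 1 (f 1) := by
  obtain ⟨M, hM⟩ := h.fin
  intro i hi
  simp only [OddSet, Set.mem_setOf_eq] at hi
  have hm1 : 1 ≤ mult f i := by rcases hi with ⟨k, hk⟩; omega
  exact ⟨mult_pos_ge_one f hM hm1, le_top_of_mult_pos h hm1⟩

lemma oddSet_finite {f : ℕ → ℕ} {N : ℕ} (h : IsPartition f N) : (OddSet f).Finite :=
  Set.Finite.subset (Set.finite_Icc 1 (f 1)) (oddSet_subset h)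

lemma mem_oddSet_ge_one {f : ℕ → ℕ} {N : ℕ} (h : IsPartition f N) {i : ℕ}
    (hi : i ∈ OddSet f) : 1 ≤ i := (oddSet_subset h hi).1

lemma dsymp_eq {f : ℕ → ℕ} :
    (Odd (OddSet f).ncard → Dsymp f = insert 0 (OddSet f)) ∧
    (¬ Odd (OddSet f).ncard → Dsymp f = OddSet f) := by
  constructor
  · intro ho
    ext i
    simp only [Dsymp, Set.mem_setOf_eq, Set.mem_insert_iff, OddSet]
    constructor
    · rintro (h1 | h2)
      · exact Or.inr h1
      · exact Or.inl h2.1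
    · rintro (h1 | h2)
      · exact Or.inr ⟨h1, ho⟩
      · exact Or.inl h2
  · intro ho
    ext i
    simp only [Dsymp, Set.mem_setOf_eq, OddSet]
    constructor
    · rintro (h1 | h2)
      · exact h1
      · exact absurd h2.2 ho
    · exact Or.inl

lemma dsymp_finite {f : ℕ → ℕ} {N : ℕ} (h : IsPartition f N) : (Dsymp f).Finite := by
  by_cases ho : Odd (OddSet f).ncard
  · rw [dsymp_eq.1 ho]
    exact (oddSet_finite h).insert 0
  · rw [dsymp_eq.2 ho]
    exact oddSet_finite h

lemma dsymp_even {f : ℕ → ℕ} {N : ℕ} (h : IsPartition f N) : Even (Dsymp f).ncard := by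
  by_cases ho : Odd (OddSet f).ncard
  · rw [dsymp_eq.1 ho, Set.ncard_insert_of_notMem (zero_not_mem_oddSet h) (oddSet_finite h)]
    exact ho.add_one
  · rw [dsymp_eq.2 ho]
    exact Nat.not_odd_iff_even.mp ho

/-- for a special orthogonal partition (of an even number), `OddSet` has even size -/
lemma oddSet_even_orth {f : ℕ → ℕ} {N : ℕ} (h : IsPartition f N) (ho : Orth f)
    (hsp : SpecialPairs f) : Even (OddSet f).ncard := by
  classical
  obtain ⟨M, hM⟩ := h.fin
  have hM2 : ∀ j, 2*M < j → f j = 0 := fun j hj => hM j (by omega)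
  have hL := align hsp Odd (f := f) (fun a b hab => by rw [Nat.odd_iff, Nat.odd_iff]; omega) M
  have hcf := count_fiber h hM2 (fun v => Odd v) (by decide)
  rw [hcf, even_sum_iff] at hL
  have hseteq : OddSet f
      = ↑(((Finset.Icc 1 (f 1)).filter (fun v => Odd v)).filter (fun i => Odd (mult f i))) := by
    ext i
    simp only [OddSet, Set.mem_setOf_eq, Finset.coe_filter, Finset.mem_filter, Finset.mem_Icc]
    constructor
    · intro hi
      have hm1 : 1 ≤ mult f i := by rcases hi with ⟨k, hk⟩; omega
      have hi1 : 1 ≤ i := mult_pos_ge_one f hM hm1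
      have hiodd : Odd i := by
        by_contra hie
        have : Even (mult f i) := ho i (Nat.not_odd_iff_even.mp hie) hi1
        rw [Nat.even_iff] at this
        rw [Nat.odd_iff] at hi
        omega
      exact ⟨⟨⟨hi1, le_top_of_mult_pos h hm1⟩, hiodd⟩, hi⟩
    · rintro ⟨_, hi⟩
      exact hi
  rw [hseteq, Set.ncard_coe_finset]
  exact hL

end CC
section GP

/-- generic version of `PairedS`/`PairedOE` -/
def GPaired (D : Set ℕ) (a b : ℕ) : Prop :=
  b < a ∧ a ∈ D ∧ b ∈ D ∧ Even ((D ∩ Set.Ioi a).ncard) ∧ D ∩ Set.Ioo b a = ∅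

lemma pairedS_iff_gpaired (f : ℕ → ℕ) (a b : ℕ) : PairedS f a b ↔ GPaired (Dsymp f) a b :=
  Iff.rfl

lemma pairedOE_iff_gpaired (f : ℕ → ℕ) (a b : ℕ) : PairedOE f a b ↔ GPaired (OddSet f) a b :=
  Iff.rfl

lemma ncard_split_mem {D : Set ℕ} (hfin : D.Finite) {x : ℕ} (hx : x ∈ D) :
    D.ncard = (D ∩ Set.Ioi x).ncard + ((D ∩ Set.Iio x).ncard + 1) := by
  have h1 : D = (D ∩ Set.Ioi x) ∪ insert x (D ∩ Set.Iio x) := by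
    ext y
    simp only [Set.mem_union, Set.mem_inter_iff, Set.mem_Ioi, Set.mem_Iio, Set.mem_insert_iff]
    constructor
    · intro hy
      rcases lt_trichotomy x y with h | h | h
      · exact Or.inl ⟨hy, h⟩
      · exact Or.inr (Or.inl h.symm)
      · exact Or.inr (Or.inr ⟨hy, h⟩)
    · rintro (⟨hy, _⟩ | hy | ⟨hy, _⟩) <;> first | exact hy | exact hy ▸ hx
  conv_lhs => rw [h1]
  rw [Set.ncard_union_eq ?hd ?h1 ?h2, Set.ncard_insert_of_notMem (by simp) ?h3]
  case hd =>
    rw [Set.disjoint_left]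
    rintro y ⟨_, hy⟩
    simp only [Set.mem_Ioi] at hy
    simp only [Set.mem_insert_iff, Set.mem_inter_iff, Set.mem_Iio]
    push_neg
    exact ⟨by omega, fun _ => by omega⟩
  case h1 => exact hfin.inter_of_left _
  case h2 => exact ((hfin.inter_of_left _).insert x)
  case h3 => exact hfin.inter_of_left _

lemma ncard_split_not_mem {D : Set ℕ} (hfin : D.Finite) {x : ℕ} (hx : x ∉ D) :
    D.ncard = (D ∩ Set.Ioi x).ncard + (D ∩ Set.Iio x).ncard := by
  have h1 : D = (D ∩ Set.Ioi x) ∪ (D ∩ Set.Iio x) := by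
    ext y
    simp only [Set.mem_union, Set.mem_inter_iff, Set.mem_Ioi, Set.mem_Iio]
    constructor
    · intro hy
      rcases lt_trichotomy x y with h | h | h
      · exact Or.inl ⟨hy, h⟩
      · exact absurd (h ▸ hy) hx
      · exact Or.inr ⟨hy, h⟩
    · rintro (⟨hy, _⟩ | ⟨hy, _⟩) <;> exact hy
  conv_lhs => rw [h1]
  rw [Set.ncard_union_eq ?hd (hfin.inter_of_left _) (hfin.inter_of_left _)]
  case hd =>
    rw [Set.disjoint_left]
    rintro y ⟨_, hy⟩ ⟨_, hy'⟩
    simp only [Set.mem_Ioi] at hy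
    simp only [Set.mem_Iio] at hy'
    omega

lemma ioi_insert_of_inf {D : Set ℕ} {x a : ℕ} (hx : x < a) (haD : a ∈ D)
    (hmin : ∀ y ∈ D, x < y → a ≤ y) :
    D ∩ Set.Ioi x = insert a (D ∩ Set.Ioi a) := by
  ext y
  simp only [Set.mem_inter_iff, Set.mem_Ioi, Set.mem_insert_iff]
  constructor
  · rintro ⟨hy, hxy⟩
    have := hmin y hy hxy
    rcases eq_or_lt_of_le this with h | h
    · exact Or.inl h.symm
    · exact Or.inr ⟨hy, h⟩
  · rintro (rfl | ⟨hy, hay⟩)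
    · exact ⟨haD, hx⟩
    · exact ⟨hy, by omega⟩

lemma gpaired_cover {D : Set ℕ} (hfin : D.Finite) (heven : Even D.ncard) {x : ℕ}
    (hx : x ∈ D ∨ Odd ((D ∩ Set.Ioi x).ncard)) :
    ∃ a b, GPaired D a b ∧ b ≤ x ∧ x ≤ a := by
  classical
  set c := (D ∩ Set.Ioi x).ncard with hc
  -- when c is odd, get the minimum of D above x
  have habove : Odd c → ∃ a, a ∈ D ∧ x < a ∧ Even ((D ∩ Set.Ioi a).ncard) ∧
      (∀ y ∈ D, x < y → a ≤ y) := by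
    intro hodd
    have hne : (D ∩ Set.Ioi x).Nonempty := by
      apply Set.nonempty_of_ncard_ne_zero
      rcases hodd with ⟨k, hk⟩; omega
    set a := sInf (D ∩ Set.Ioi x) with ha
    have haM : a ∈ D ∩ Set.Ioi x := Nat.sInf_mem hne
    have hmin : ∀ y ∈ D, x < y → a ≤ y := fun y hy hxy => Nat.sInf_le ⟨hy, hxy⟩
    have hins := ioi_insert_of_inf haM.2 haM.1 hmin
    have hcount : c = (D ∩ Set.Ioi a).ncard + 1 := by
      rw [hc, hins, Set.ncard_insert_of_notMem (by simp) (hfin.inter_of_left _)]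
    refine ⟨a, haM.1, haM.2, ?_, hmin⟩
    rw [Nat.odd_iff] at hodd
    rw [Nat.even_iff]
    omega
  -- when D below x is nonempty, get its max
  have hbelow : (D ∩ Set.Iio x).ncard ≠ 0 → ∃ b, b ∈ D ∧ b < x ∧
      (∀ y ∈ D, y < x → y ≤ b) := by
    intro hne0
    have hne := Set.nonempty_of_ncard_ne_zero hne0
    set b := sSup (D ∩ Set.Iio x) with hb
    have hbM : b ∈ D ∩ Set.Iio x := Nat.sSup_mem hne (hfin.inter_of_left _).bddAbove
    exact ⟨b, hbM.1, hbM.2, fun y hy hyx =>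
      le_csSup (hfin.inter_of_left _).bddAbove ⟨hy, hyx⟩⟩
  by_cases hxD : x ∈ D
  · rcases Nat.even_or_odd c with hce | hco
    · -- a := x, b := max below
      have hsplit := ncard_split_mem hfin hxD
      have hbne : (D ∩ Set.Iio x).ncard ≠ 0 := by
        rw [Nat.even_iff] at heven hce
        intro h0
        rw [hsplit, h0] at heven
        omega
      obtain ⟨b, hbD, hbx, hbmax⟩ := hbelow hbne
      refine ⟨x, b, ⟨hbx, hxD, hbD, hce, ?_⟩, le_of_lt hbx, le_rfl⟩
      ext y
      simp only [Set.mem_inter_iff, Set.mem_Ioo, Set.mem_empty_iff_false, iff_false]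
      rintro ⟨hy, hby, hyx⟩
      have := hbmax y hy hyx
      omega
    · obtain ⟨a, haD, hxa, haE, hamin⟩ := habove hco
      refine ⟨a, x, ⟨hxa, haD, hxD, haE, ?_⟩, le_rfl, le_of_lt hxa⟩
      ext y
      simp only [Set.mem_inter_iff, Set.mem_Ioo, Set.mem_empty_iff_false, iff_false]
      rintro ⟨hy, hxy, hya⟩
      have := hamin y hy hxy
      omega
  · have hco : Odd c := hx.resolve_left hxD
    obtain ⟨a, haD, hxa, haE, hamin⟩ := habove hco
    have hsplit := ncard_split_not_mem hfin hxD
    have hbne : (D ∩ Set.Iio x).ncard ≠ 0 := by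
      rw [Nat.even_iff] at heven
      rw [Nat.odd_iff] at hco
      intro h0
      rw [hsplit, h0] at heven
      omega
    obtain ⟨b, hbD, hbx, hbmax⟩ := hbelow hbne
    refine ⟨a, b, ⟨by omega, haD, hbD, haE, ?_⟩, le_of_lt hbx, le_of_lt hxa⟩
    ext y
    simp only [Set.mem_inter_iff, Set.mem_Ioo, Set.mem_empty_iff_false, iff_false]
    rintro ⟨hy, hby, hya⟩
    rcases lt_trichotomy y x with h | h | h
    · have := hbmax y hy h; omega
    · exact hxD (h ▸ hy)
    · have := hamin y hy h; omega

lemma gpaired_ioi_eq {D : Set ℕ} {a b x : ℕ} (hp : GPaired D a b)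
    (hbx : b ≤ x) (hxa : x < a) :
    D ∩ Set.Ioi x = insert a (D ∩ Set.Ioi a) := by
  obtain ⟨hba, haD, hbD, haE, hempty⟩ := hp
  apply ioi_insert_of_inf hxa haD
  intro y hy hxy
  by_contra hc
  have hya : y < a := by omega
  have : y ∈ D ∩ Set.Ioo b a := ⟨hy, by omega, hya⟩
  rw [hempty] at this
  exact this

lemma gpaired_mem_or_odd {D : Set ℕ} (hfin : D.Finite) {a b x : ℕ} (hp : GPaired D a b)
    (hbx : b ≤ x) (hxa : x ≤ a) : x ∈ D ∨ Odd ((D ∩ Set.Ioi x).ncard) := by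
  by_cases hxD : x ∈ D
  · exact Or.inl hxD
  · right
    have hxa' : x < a := by
      rcases eq_or_lt_of_le hxa with h | h
      · exact absurd (h ▸ hp.2.1) hxD
      · exact h
    rw [gpaired_ioi_eq hp hbx hxa',
      Set.ncard_insert_of_notMem (by simp) (hfin.inter_of_left _)]
    have := hp.2.2.2.1
    rw [Nat.even_iff] at this
    rw [Nat.odd_iff]
    omega

lemma gpaired_Ici_even {D : Set ℕ} (hfin : D.Finite) {a b : ℕ} (hp : GPaired D a b) :
    Even ((D ∩ Set.Ici b).ncard) := by
  obtain ⟨hba, haD, hbD, haE, hempty⟩ := hp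
  have h1 : D ∩ Set.Ici b = insert b (insert a (D ∩ Set.Ioi a)) := by
    ext y
    simp only [Set.mem_inter_iff, Set.mem_Ici, Set.mem_insert_iff, Set.mem_Ioi]
    constructor
    · rintro ⟨hy, hby⟩
      rcases eq_or_lt_of_le hby with h | h
      · exact Or.inl h.symm
      · right
        have hya : ¬ (y < a) := by
          intro hya
          have : y ∈ D ∩ Set.Ioo b a := ⟨hy, h, hya⟩
          rw [hempty] at this
          exact this
        rcases eq_or_lt_of_le (by omega : a ≤ y) with h2 | h2
        · exact Or.inl h2.symm
        · exact Or.inr ⟨hy, h2⟩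
    · rintro (rfl | rfl | ⟨hy, hay⟩)
      · exact ⟨hbD, le_rfl⟩
      · exact ⟨haD, by omega⟩
      · exact ⟨hy, by omega⟩
  rw [h1, Set.ncard_insert_of_notMem ?hb ?hf1, Set.ncard_insert_of_notMem (by simp)
    (hfin.inter_of_left _)]
  case hb =>
    simp only [Set.mem_insert_iff, Set.mem_inter_iff, Set.mem_Ioi]
    push_neg
    exact ⟨by omega, fun _ => by omega⟩
  case hf1 => exact (hfin.inter_of_left _).insert a
  rw [Nat.even_iff] at haE ⊢
  omega

lemma gpaired_unique_aux {D : Set ℕ} (hfin : D.Finite) {a b a' b' v : ℕ}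
    (hp : GPaired D a b) (hp' : GPaired D a' b')
    (hbv : b ≤ v) (hva : v ≤ a) (hb'v : b' ≤ v) (hva' : v ≤ a') (hlt : a' < a) : False := by
  obtain ⟨hba, haD, hbD, haE, hempty⟩ := hp
  have hba' : b ≤ a' := le_trans hbv hva'
  rcases eq_or_lt_of_le hba' with h | h
  · -- a' = b : parity contradiction
    have hioi : D ∩ Set.Ioi a' = insert a (D ∩ Set.Ioi a) := by
      apply ioi_insert_of_inf (by omega) haD
      intro y hy hxy
      by_contra hc
      have : y ∈ D ∩ Set.Ioo b a := ⟨hy, by omega, by omega⟩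
      rw [hempty] at this
      exact this
    have hE' := hp'.2.2.2.1
    rw [hioi, Set.ncard_insert_of_notMem (by simp) (hfin.inter_of_left _)] at hE'
    rw [Nat.even_iff] at hE' haE
    omega
  · -- b < a' < a : contradicts emptiness
    have : a' ∈ D ∩ Set.Ioo b a := ⟨hp'.2.1, h, hlt⟩
    rw [hempty] at this
    exact this

lemma gpaired_unique {D : Set ℕ} (hfin : D.Finite) {a b a' b' v : ℕ}
    (hp : GPaired D a b) (hp' : GPaired D a' b')
    (hbv : b ≤ v) (hva : v ≤ a) (hb'v : b' ≤ v) (hva' : v ≤ a') : a = a' ∧ b = b' := by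
  have ha : a = a' := by
    rcases lt_trichotomy a a' with h | h | h
    · exact absurd (gpaired_unique_aux hfin hp' hp hb'v hva' hbv hva h) id
    · exact h
    · exact absurd (gpaired_unique_aux hfin hp hp' hbv hva hb'v hva' h) id
  refine ⟨ha, ?_⟩
  by_contra hbb
  rcases lt_trichotomy b b' with h | h | h
  · have : b' ∈ D ∩ Set.Ioo b a := ⟨hp'.2.2.1, h, ha ▸ hp'.1⟩
    rw [hp.2.2.2.2] at this
    exact this
  · exact hbb h
  · have : b ∈ D ∩ Set.Ioo b' a' := ⟨hp.2.2.1, h, by rw [← ha]; exact hp.1⟩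
    rw [hp'.2.2.2.2] at this
    exact this

end GP
section Intervals

lemma oddSet_subset_dsymp (f : ℕ → ℕ) : OddSet f ⊆ Dsymp f := fun _ h => Or.inl h

lemma dsymp_ioi_eq (f : ℕ → ℕ) (x : ℕ) : Dsymp f ∩ Set.Ioi x = OddSet f ∩ Set.Ioi x := by
  ext y
  simp only [Set.mem_inter_iff, Set.mem_Ioi, Dsymp, OddSet, Set.mem_setOf_eq]
  constructor
  · rintro ⟨h1 | h2, hy⟩
    · exact ⟨h1, hy⟩
    · omega
  · rintro ⟨h1, hy⟩
    exact ⟨Or.inl h1, hy⟩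

lemma dsymp_ici_eq (f : ℕ → ℕ) {x : ℕ} (hx : 1 ≤ x) :
    Dsymp f ∩ Set.Ici x = OddSet f ∩ Set.Ici x := by
  ext y
  simp only [Set.mem_inter_iff, Set.mem_Ici, Dsymp, OddSet, Set.mem_setOf_eq]
  constructor
  · rintro ⟨h1 | h2, hy⟩
    · exact ⟨h1, hy⟩
    · omega
  · rintro ⟨h1, hy⟩
    exact ⟨Or.inl h1, hy⟩

lemma ici_eq_ioi_of_not_mem {D : Set ℕ} {x : ℕ} (hx : x ∉ D) :
    D ∩ Set.Ici x = D ∩ Set.Ioi x := by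
  ext y
  simp only [Set.mem_inter_iff, Set.mem_Ici, Set.mem_Ioi]
  constructor
  · rintro ⟨hy, hxy⟩
    rcases eq_or_lt_of_le hxy with h | h
    · exact absurd (h ▸ hy) hx
    · exact ⟨hy, h⟩
  · rintro ⟨hy, hxy⟩
    exact ⟨hy, le_of_lt hxy⟩

/-- structure of a symplectic interval -/
lemma intervalS_rep {f : ℕ → ℕ} {N : ℕ} (h : IsPartition f N) {Δ : Set ℕ}
    (hΔ : IsIntervalS f Δ) :
    ∃ a b : ℕ, b ≤ a ∧
      (∀ v, v ∈ Δ ↔ ((v = 0 ∨ 1 ≤ mult f v) ∧ b ≤ v ∧ v ≤ a)) ∧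
      (GPaired (Dsymp f) a b ∨
        (b = a ∧ ¬ ∃ a' b', GPaired (Dsymp f) a' b' ∧ b' ≤ a ∧ a ≤ a')) ∧
      Even ((OddSet f ∩ Set.Ioi a).ncard) ∧
      (1 ≤ b → Even ((OddSet f ∩ Set.Ici b).ncard)) := by
  have hfin := dsymp_finite h
  rcases hΔ with ⟨a, b, hp, hset⟩ | ⟨i, hie, him, hnc, hset⟩
  · rw [pairedS_iff_gpaired] at hp
    refine ⟨a, b, le_of_lt hp.1, ?_, Or.inl hp, ?_, ?_⟩
    · intro v; rw [hset]; rfl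
    · rw [← dsymp_ioi_eq]; exact hp.2.2.2.1
    · intro hb
      rw [← dsymp_ici_eq f hb]
      exact gpaired_Ici_even hfin hp
  · -- singleton
    have hnc' : ¬ (i ∈ Dsymp f ∨ Odd ((Dsymp f ∩ Set.Ioi i).ncard)) := by
      intro hc
      exact hnc (gpaired_cover hfin (dsymp_even h) hc)
    push_neg at hnc'
    obtain ⟨hiD, hiE⟩ := hnc'
    have hiE' : Even ((OddSet f ∩ Set.Ioi i).ncard) := by
      rw [← dsymp_ioi_eq]
      exact Nat.not_odd_iff_even.mp hiE
    refine ⟨i, i, le_rfl, ?_, Or.inr ⟨rfl, fun ⟨a', b', hp', hb', ha'⟩ => hnc ⟨a', b', hp', hb', ha'⟩⟩,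
      hiE', ?_⟩
    · intro v
      rw [hset]
      simp only [Set.mem_singleton_iff]
      constructor
      · rintro rfl
        refine ⟨?_, le_rfl, le_rfl⟩
        rcases him with h0 | ⟨_, hm⟩
        · exact Or.inl h0
        · exact Or.inr hm
      · rintro ⟨_, h1, h2⟩
        omega
    · intro _
      have hinotd : i ∉ OddSet f := fun hc => hiD (oddSet_subset_dsymp f hc)
      rw [ici_eq_ioi_of_not_mem hinotd]
      exact hiE'

/-- structure of an orthogonal interval -/
lemma intervalOE_rep {f : ℕ → ℕ} {N : ℕ} (h : IsPartition f N) (ho : Orth f)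
    (hsp : SpecialPairs f) {Δ : Set ℕ} (hΔ : IsIntervalOE f Δ) :
    ∃ a b : ℕ, b ≤ a ∧ 1 ≤ b ∧
      (∀ v, v ∈ Δ ↔ (1 ≤ mult f v ∧ b ≤ v ∧ v ≤ a)) ∧
      (GPaired (OddSet f) a b ∨
        (b = a ∧ ¬ ∃ a' b', GPaired (OddSet f) a' b' ∧ b' ≤ a ∧ a ≤ a')) ∧
      Even ((OddSet f ∩ Set.Ioi a).ncard) ∧
      Even ((OddSet f ∩ Set.Ici b).ncard) := by
  have hfin := oddSet_finite h
  rcases hΔ with ⟨a, b, hp, hset⟩ | ⟨i, hio, him, hnc, hset⟩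
  · rw [pairedOE_iff_gpaired] at hp
    refine ⟨a, b, le_of_lt hp.1, mem_oddSet_ge_one h hp.2.2.1, ?_, Or.inl hp,
      hp.2.2.2.1, gpaired_Ici_even hfin hp⟩
    intro v; rw [hset]; rfl
  · have hnc' : ¬ (i ∈ OddSet f ∨ Odd ((OddSet f ∩ Set.Ioi i).ncard)) := by
      intro hc
      exact hnc (gpaired_cover hfin (oddSet_even_orth h ho hsp) hc)
    push_neg at hnc'
    obtain ⟨hiD, hiE⟩ := hnc'
    have hiE' : Even ((OddSet f ∩ Set.Ioi i).ncard) := Nat.not_odd_iff_even.mp hiE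
    refine ⟨i, i, le_rfl, by rcases hio with ⟨k, hk⟩; omega,
      ?_, Or.inr ⟨rfl, fun ⟨a', b', hp', hb', ha'⟩ => hnc ⟨a', b', hp', hb', ha'⟩⟩, hiE', ?_⟩
    · intro v
      rw [hset]
      simp only [Set.mem_singleton_iff]
      constructor
      · rintro rfl
        exact ⟨him, le_rfl, le_rfl⟩
      · rintro ⟨_, h1, h2⟩
        omega
    · rw [ici_eq_ioi_of_not_mem hiD]
      exact hiE'

/-- values in a symplectic interval are even -/
lemma intervalS_even_val {f : ℕ → ℕ} {N : ℕ} (h : IsPartition f N) (hs : Symp f)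
    (hsp : SpecialPairs f) {Δ : Set ℕ} (hΔ : IsIntervalS f Δ) {v : ℕ} (hv : v ∈ Δ) :
    Even v := by
  obtain ⟨M, hM⟩ := h.fin
  have hfin := dsymp_finite h
  rcases hΔ with ⟨a, b, hp, hset⟩ | ⟨i, hie, _, _, hset⟩
  · rw [pairedS_iff_gpaired] at hp
    rw [hset] at hv
    obtain ⟨hm, hbv, hva⟩ := hv
    rcases hm with h0 | hm
    · rw [h0]; exact Even.zero
    · by_contra hodd
      have hvodd : Odd v := Nat.not_even_iff_odd.mp hodd
      have hv1 : 1 ≤ v := mult_pos_ge_one f hM hm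
      rcases gpaired_mem_or_odd hfin hp hbv hva with hvD | hO
      · rcases hvD with hD | hD
        · have := hs v hvodd
          rw [Nat.even_iff] at this
          rw [Nat.odd_iff] at hD
          omega
        · omega
      · rw [dsymp_ioi_eq] at hO
        have := C1 h hs hsp hvodd hm
        rw [Nat.even_iff] at this
        rw [Nat.odd_iff] at hO
        omega
  · rw [hset] at hv
    rw [Set.mem_singleton_iff] at hv
    exact hv ▸ hie

/-- values in an orthogonal interval are odd -/
lemma intervalOE_odd_val {f : ℕ → ℕ} {N : ℕ} (h : IsPartition f N) (ho : Orth f)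
    (hsp : SpecialPairs f) {Δ : Set ℕ} (hΔ : IsIntervalOE f Δ) {v : ℕ} (hv : v ∈ Δ) :
    Odd v := by
  obtain ⟨M, hM⟩ := h.fin
  have hfin := oddSet_finite h
  rcases hΔ with ⟨a, b, hp, hset⟩ | ⟨i, hio, _, _, hset⟩
  · rw [pairedOE_iff_gpaired] at hp
    rw [hset] at hv
    obtain ⟨hm, hbv, hva⟩ := hv
    by_contra heven
    have hve : Even v := Nat.not_odd_iff_even.mp heven
    have hv1 : 1 ≤ v := mult_pos_ge_one f hM hm
    rcases gpaired_mem_or_odd hfin hp hbv hva with hvD | hO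
    · have := ho v hve hv1
      rw [Nat.even_iff] at this
      have hD : Odd (mult f v) := hvD
      rw [Nat.odd_iff] at hD
      omega
    · have := C2 h ho hsp hve hm
      rw [Nat.even_iff] at this
      rw [Nat.odd_iff] at hO
      omega
  · rw [hset] at hv
    rw [Set.mem_singleton_iff] at hv
    exact hv ▸ hio

/-- intervals sharing a value coincide (symplectic) -/
lemma intervalS_unique {f : ℕ → ℕ} {N : ℕ} (h : IsPartition f N) {Δ Δ' : Set ℕ}
    (hΔ : IsIntervalS f Δ) (hΔ' : IsIntervalS f Δ') {v : ℕ} (hv : v ∈ Δ) (hv' : v ∈ Δ') :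
    Δ = Δ' := by
  have hfin := dsymp_finite h
  rcases hΔ with ⟨a, b, hp, hset⟩ | ⟨i, hie, him, hnc, hset⟩ <;>
    rcases hΔ' with ⟨a', b', hp', hset'⟩ | ⟨i', hie', him', hnc', hset'⟩
  · rw [pairedS_iff_gpaired] at hp hp'
    rw [hset] at hv
    rw [hset'] at hv'
    obtain ⟨ha, hb⟩ := gpaired_unique hfin hp hp' hv.2.1 hv.2.2 hv'.2.1 hv'.2.2
    rw [hset, hset', ha, hb]
  · rw [pairedS_iff_gpaired] at hp
    rw [hset'] at hv'
    rw [Set.mem_singleton_iff] at hv'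
    subst hv'
    rw [hset] at hv
    exact absurd ⟨a, b, hp, hv.2.1, hv.2.2⟩ hnc'
  · rw [pairedS_iff_gpaired] at hp'
    rw [hset] at hv
    rw [Set.mem_singleton_iff] at hv
    subst hv
    rw [hset'] at hv'
    exact absurd ⟨a', b', hp', hv'.2.1, hv'.2.2⟩ hnc
  · rw [hset] at hv
    rw [hset'] at hv'
    rw [Set.mem_singleton_iff] at hv hv'
    rw [hset, hset', ← hv, ← hv']

/-- intervals sharing a value coincide (orthogonal) -/
lemma intervalOE_unique {f : ℕ → ℕ} {N : ℕ} (h : IsPartition f N) {Δ Δ' : Set ℕ}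
    (hΔ : IsIntervalOE f Δ) (hΔ' : IsIntervalOE f Δ') {v : ℕ} (hv : v ∈ Δ) (hv' : v ∈ Δ') :
    Δ = Δ' := by
  have hfin := oddSet_finite h
  rcases hΔ with ⟨a, b, hp, hset⟩ | ⟨i, hie, him, hnc, hset⟩ <;>
    rcases hΔ' with ⟨a', b', hp', hset'⟩ | ⟨i', hie', him', hnc', hset'⟩
  · rw [pairedOE_iff_gpaired] at hp hp'
    rw [hset] at hv
    rw [hset'] at hv'
    obtain ⟨ha, hb⟩ := gpaired_unique hfin hp hp' hv.2.1 hv.2.2 hv'.2.1 hv'.2.2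
    rw [hset, hset', ha, hb]
  · rw [pairedOE_iff_gpaired] at hp
    rw [hset'] at hv'
    rw [Set.mem_singleton_iff] at hv'
    subst hv'
    rw [hset] at hv
    exact absurd ⟨a, b, hp, hv.2.1, hv.2.2⟩ hnc'
  · rw [pairedOE_iff_gpaired] at hp'
    rw [hset] at hv
    rw [Set.mem_singleton_iff] at hv
    subst hv
    rw [hset'] at hv'
    exact absurd ⟨a', b', hp', hv'.2.1, hv'.2.2⟩ hnc
  · rw [hset] at hv
    rw [hset'] at hv'
    rw [Set.mem_singleton_iff] at hv hv'
    rw [hset, hset', ← hv, ← hv']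

/-- `Jset` of a symplectic interval, via the representation -/
lemma jsetS_char {f : ℕ → ℕ} {N : ℕ} (h : IsPartition f N) {Δ : Set ℕ} {a b : ℕ}
    (hchar : ∀ v, v ∈ Δ ↔ ((v = 0 ∨ 1 ≤ mult f v) ∧ b ≤ v ∧ v ≤ a)) :
    ∀ j, j ∈ Jset f Δ ↔ (1 ≤ j ∧ b ≤ f j ∧ f j ≤ a) := by
  obtain ⟨M, hM⟩ := h.fin
  intro j
  simp only [Jset, Set.mem_setOf_eq, hchar]
  constructor
  · rintro ⟨hj, _, h2⟩
    exact ⟨hj, h2⟩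
  · rintro ⟨hj, h2⟩
    refine ⟨hj, ?_, h2⟩
    rcases Nat.eq_zero_or_pos (f j) with h0 | h0
    · exact Or.inl h0
    · exact Or.inr (mult_pos_of_attained f hM hj rfl h0)

/-- `Jset` of an orthogonal interval, via the representation -/
lemma jsetOE_char {f : ℕ → ℕ} {N : ℕ} (h : IsPartition f N) {Δ : Set ℕ} {a b : ℕ}
    (hb : 1 ≤ b) (hchar : ∀ v, v ∈ Δ ↔ (1 ≤ mult f v ∧ b ≤ v ∧ v ≤ a)) :
    ∀ j, j ∈ Jset f Δ ↔ (1 ≤ j ∧ b ≤ f j ∧ f j ≤ a) := by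
  obtain ⟨M, hM⟩ := h.fin
  intro j
  simp only [Jset, Set.mem_setOf_eq, hchar]
  constructor
  · rintro ⟨hj, _, h2⟩
    exact ⟨hj, h2⟩
  · rintro ⟨hj, h2⟩
    exact ⟨hj, mult_pos_of_attained f hM hj rfl (by omega), h2⟩

end Intervals
section PM

/-- the least element of an interval's `J`-set is odd -/
lemma least_odd {f : ℕ → ℕ} {N : ℕ} (h : IsPartition f N) {Jst : Set ℕ} {a b : ℕ}
    (hJ : ∀ j, j ∈ Jst ↔ (1 ≤ j ∧ b ≤ f j ∧ f j ≤ a))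
    (htop : Even ((OddSet f ∩ Set.Ioi a).ncard))
    {j : ℕ} (hj : IsLeast Jst j) : Odd j := by
  obtain ⟨M, hM⟩ := h.fin
  have hjm := (hJ j).mp hj.1
  obtain ⟨hj1, hbf, hfa⟩ := hjm
  rcases eq_or_lt_of_le hj1 with h1 | h2
  · rw [← h1]; decide
  · -- j ≥ 2
    have hprev : a + 1 ≤ f (j-1) := by
      by_contra hc
      have hmem : j - 1 ∈ Jst := by
        rw [hJ]
        refine ⟨by omega, ?_, by omega⟩
        have := h.mono (j := j-1) (k := j) (by omega) (by omega)
        omega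
      have := hj.2 hmem
      omega
    obtain ⟨c, hc, hpar⟩ := PL h hM (x := a+1) (by omega)
    have hcj : c = j - 1 := by
      have hle : j - 1 ≤ c := (hc (j-1) (by omega)).mp hprev
      have hge : c ≤ j - 1 := by
        rcases Nat.eq_zero_or_pos c with h0 | h0
        · omega
        · have hfc := (hc c h0).mpr le_rfl
          by_contra hcc
          have := h.mono hj1 (show j ≤ c by omega)
          omega
      omega
    have hceven : Even c := by
      apply hpar.mpr
      rw [← Ioi_eq_Ici]
      exact htop
    rw [Nat.even_iff] at hceven
    rw [Nat.odd_iff]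
    omega

/-- the greatest element of an interval's `J`-set is even -/
lemma greatest_even {f : ℕ → ℕ} {N : ℕ} (h : IsPartition f N) {Jst : Set ℕ} {a b : ℕ}
    (hJ : ∀ j, j ∈ Jst ↔ (1 ≤ j ∧ b ≤ f j ∧ f j ≤ a))
    (hbot : 1 ≤ b → Even ((OddSet f ∩ Set.Ici b).ncard))
    {j : ℕ} (hj : IsGreatest Jst j) : Even j := by
  obtain ⟨M, hM⟩ := h.fin
  have hjm := (hJ j).mp hj.1
  obtain ⟨hj1, hbf, hfa⟩ := hjm
  have hb1 : 1 ≤ b := by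
    by_contra hb0
    have hk : max j M + 1 ∈ Jst := by
      rw [hJ]
      have hfk : f (max j M + 1) = 0 := hM _ (by omega)
      exact ⟨by omega, by omega, by omega⟩
    have := hj.2 hk
    omega
  have hnext : ¬ (b ≤ f (j+1)) := by
    intro hc
    have hmem : j + 1 ∈ Jst := by
      rw [hJ]
      refine ⟨by omega, hc, ?_⟩
      have := h.mono hj1 (show j ≤ j+1 by omega)
      omega
    have := hj.2 hmem
    omega
  obtain ⟨c, hc, hpar⟩ := PL h hM (x := b) hb1
  have hcj : c = j := by
    have hle : j ≤ c := (hc j hj1).mp hbf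
    have hge : c ≤ j := by
      by_contra hcc
      have hfc := (hc c (by omega)).mpr le_rfl
      have := h.mono (show 1 ≤ j+1 by omega) (show j+1 ≤ c by omega)
      omega
    omega
  have := hpar.mpr (hbot hb1)
  rw [← hcj]
  exact this

lemma PM1S {f : ℕ → ℕ} {N : ℕ} (h : IsPartition f N) {Δ : Set ℕ}
    (hΔ : IsIntervalS f Δ) {j : ℕ} (hj : IsLeast (Jset f Δ) j) : Odd j := by
  obtain ⟨a, b, _, hchar, _, htop, _⟩ := intervalS_rep h hΔ
  exact least_odd h (fun j => (jsetS_char h hchar j).trans (by rfl)) htop hj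

lemma PM2S {f : ℕ → ℕ} {N : ℕ} (h : IsPartition f N) {Δ : Set ℕ}
    (hΔ : IsIntervalS f Δ) {j : ℕ} (hj : IsGreatest (Jset f Δ) j) : Even j := by
  obtain ⟨a, b, _, hchar, _, _, hbot⟩ := intervalS_rep h hΔ
  exact greatest_even h (jsetS_char h hchar) hbot hj

lemma PM1OE {f : ℕ → ℕ} {N : ℕ} (h : IsPartition f N) (ho : Orth f) (hsp : SpecialPairs f)
    {Δ : Set ℕ} (hΔ : IsIntervalOE f Δ) {j : ℕ} (hj : IsLeast (Jset f Δ) j) : Odd j := by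
  obtain ⟨a, b, _, hb1, hchar, _, htop, _⟩ := intervalOE_rep h ho hsp hΔ
  exact least_odd h (jsetOE_char h hb1 hchar) htop hj

lemma PM2OE {f : ℕ → ℕ} {N : ℕ} (h : IsPartition f N) (ho : Orth f) (hsp : SpecialPairs f)
    {Δ : Set ℕ} (hΔ : IsIntervalOE f Δ) {j : ℕ} (hj : IsGreatest (Jset f Δ) j) : Even j := by
  obtain ⟨a, b, _, hb1, hchar, _, _, hbot⟩ := intervalOE_rep h ho hsp hΔ
  exact greatest_even h (jsetOE_char h hb1 hchar) (fun _ => hbot) hj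

end PM
section UpDown

lemma coverS {f : ℕ → ℕ} {N : ℕ} (h : IsPartition f N) {j : ℕ} (hj : 1 ≤ j)
    (he : Even (f j)) : ∃ Δ, IsIntervalS f Δ ∧ f j ∈ Δ := by
  classical
  obtain ⟨M, hM⟩ := h.fin
  set v := f j with hv
  have hm : v = 0 ∨ 1 ≤ mult f v := by
    rcases Nat.eq_zero_or_pos v with h0 | h0
    · exact Or.inl h0
    · exact Or.inr (mult_pos_of_attained f hM hj rfl h0)
  by_cases hcov : ∃ a b, PairedS f a b ∧ b ≤ v ∧ v ≤ a
  · obtain ⟨a, b, hp, hbv, hva⟩ := hcov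
    refine ⟨{i | (i = 0 ∨ 1 ≤ mult f i) ∧ b ≤ i ∧ i ≤ a}, Or.inl ⟨a, b, hp, rfl⟩, ?_⟩
    exact ⟨hm, hbv, hva⟩
  · refine ⟨{v}, Or.inr ⟨v, he, ?_, hcov, rfl⟩, rfl⟩
    rcases hm with h0 | h0
    · exact Or.inl h0
    · right
      refine ⟨?_, h0⟩
      rcases Nat.eq_zero_or_pos v with hz | hz
      · rw [hz] at h0
        rw [mult_zero_eq f hM] at h0
        omega
      · rw [Nat.even_iff] at he
        omega

lemma coverOE {f : ℕ → ℕ} {N : ℕ} (h : IsPartition f N) {j : ℕ} (hj : 1 ≤ j)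
    (hodd : Odd (f j)) : ∃ Δ, IsIntervalOE f Δ ∧ f j ∈ Δ := by
  classical
  obtain ⟨M, hM⟩ := h.fin
  set v := f j with hv
  have hv1 : 1 ≤ v := by rcases hodd with ⟨k, hk⟩; omega
  have hm : 1 ≤ mult f v := mult_pos_of_attained f hM hj rfl hv1
  by_cases hcov : ∃ a b, PairedOE f a b ∧ b ≤ v ∧ v ≤ a
  · obtain ⟨a, b, hp, hbv, hva⟩ := hcov
    refine ⟨{i | 1 ≤ mult f i ∧ b ≤ i ∧ i ≤ a}, Or.inl ⟨a, b, hp, rfl⟩, ?_⟩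
    exact ⟨hm, hbv, hva⟩
  · exact ⟨{v}, Or.inr ⟨v, hodd, hm, hcov, rfl⟩, rfl⟩

variable {f1 f2 : ℕ → ℕ} {N1 N2 : ℕ}

lemma UP (h1 : IsPartition f1 N1) (h1s : Symp f1) (h1sp : SpecialPairs f1)
    (h2 : IsPartition f2 N2) (h2o : Orth f2) (h2sp : SpecialPairs f2)
    {j : ℕ} (hj1 : 1 ≤ j) (he : Even (f1 j)) (hodd : Odd (f2 j)) :
    ∃ m, j ≤ m ∧ m ∈ JminusSet f1 f2 ∧ ∀ k, j < k → k ≤ m → k ∉ JplusSet f1 f2 := by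
  classical
  obtain ⟨Δ1, hΔ1, hv1⟩ := coverS h1 hj1 he
  obtain ⟨Δ2, hΔ2, hv2⟩ := coverOE h2 hj1 hodd
  obtain ⟨a1, b1, hba1, hchar1, _, _, _⟩ := intervalS_rep h1 hΔ1
  obtain ⟨a2, b2, hba2, hb21, hchar2, _, _, _⟩ := intervalOE_rep h2 h2o h2sp hΔ2
  have hJ1 := jsetS_char h1 hchar1
  have hJ2 := jsetOE_char h2 hb21 hchar2
  have hjJ1 : j ∈ Jset f1 Δ1 := ⟨hj1, hv1⟩
  have hjJ2 : j ∈ Jset f2 Δ2 := ⟨hj1, hv2⟩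
  obtain ⟨M2, hM2⟩ := h2.fin
  have hbdd2 : ∀ k ∈ Jset f2 Δ2, k ≤ M2 := by
    intro k hk
    have := (hJ2 k).mp hk
    by_contra hc
    have := hM2 k (by omega)
    omega
  set e2 := sSup (Jset f2 Δ2) with he2
  have he2mem : e2 ∈ Jset f2 Δ2 := Nat.sSup_mem ⟨j, hjJ2⟩ ⟨M2, fun k hk => hbdd2 k hk⟩
  have he2ub : ∀ k ∈ Jset f2 Δ2, k ≤ e2 := fun k hk =>
    le_csSup ⟨M2, fun x hx => hbdd2 x hx⟩ hk
  have hje2 : j ≤ e2 := he2ub j hjJ2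
  have he2g : IsGreatest (Jset f2 Δ2) e2 := ⟨he2mem, he2ub⟩
  -- main construction, depending on whether Δ1's J-set is bounded
  have hmain : ∃ m, j ≤ m ∧ (∀ k, j ≤ k → k ≤ m → k ∈ Jset f1 Δ1 ∧ k ∈ Jset f2 Δ2) ∧
      ((∃ Δ, IsIntervalS f1 Δ ∧ IsGreatest (Jset f1 Δ) m) ∨
       (∃ Δ, IsIntervalOE f2 Δ ∧ IsGreatest (Jset f2 Δ) m)) := by
    by_cases hb1 : 1 ≤ b1
    · obtain ⟨M1, hM1⟩ := h1.fin
      have hbdd1 : ∀ k ∈ Jset f1 Δ1, k ≤ M1 := by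
        intro k hk
        have := (hJ1 k).mp hk
        by_contra hc
        have := hM1 k (by omega)
        omega
      set e1 := sSup (Jset f1 Δ1) with he1
      have he1mem : e1 ∈ Jset f1 Δ1 := Nat.sSup_mem ⟨j, hjJ1⟩ ⟨M1, fun k hk => hbdd1 k hk⟩
      have he1ub : ∀ k ∈ Jset f1 Δ1, k ≤ e1 := fun k hk =>
        le_csSup ⟨M1, fun x hx => hbdd1 x hx⟩ hk
      have hje1 : j ≤ e1 := he1ub j hjJ1
      refine ⟨min e1 e2, le_min hje1 hje2, ?_, ?_⟩
      · intro k hjk hkm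
        have hk1 : 1 ≤ k := le_trans hj1 hjk
        constructor
        · rw [hJ1]
          have hke1 : k ≤ e1 := le_trans hkm (min_le_left _ _)
          have hm1 := (hJ1 e1).mp he1mem
          have hup := h1.mono hk1 hke1
          have hdn := h1.mono hj1 hjk
          have hj' := (hJ1 j).mp hjJ1
          exact ⟨hk1, by omega, by omega⟩
        · rw [hJ2]
          have hke2 : k ≤ e2 := le_trans hkm (min_le_right _ _)
          have hm2 := (hJ2 e2).mp he2mem
          have hup := h2.mono hk1 hke2
          have hdn := h2.mono hj1 hjk
          have hj' := (hJ2 j).mp hjJ2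
          exact ⟨hk1, by omega, by omega⟩
      · rcases le_total e1 e2 with hle | hle
        · rw [min_eq_left hle]
          exact Or.inl ⟨Δ1, hΔ1, he1mem, he1ub⟩
        · rw [min_eq_right hle]
          exact Or.inr ⟨Δ2, hΔ2, he2g⟩
    · -- b1 = 0 : Jset Δ1 is upward closed
      refine ⟨e2, hje2, ?_, Or.inr ⟨Δ2, hΔ2, he2g⟩⟩
      intro k hjk hkm
      have hk1 : 1 ≤ k := le_trans hj1 hjk
      constructor
      · rw [hJ1]
        have hdn := h1.mono hj1 hjk
        have hj' := (hJ1 j).mp hjJ1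
        exact ⟨hk1, by omega, by omega⟩
      · rw [hJ2]
        have hm2 := (hJ2 e2).mp he2mem
        have hup := h2.mono hk1 hkm
        have hdn := h2.mono hj1 hjk
        have hj' := (hJ2 j).mp hjJ2
        exact ⟨hk1, by omega, by omega⟩
  obtain ⟨m, hjm, hconv, hgr⟩ := hmain
  have hmmem := hconv m hjm le_rfl
  refine ⟨m, hjm, ⟨le_trans hj1 hjm, intervalS_even_val h1 h1s h1sp hΔ1 hmmem.1.2,
    intervalOE_odd_val h2 h2o h2sp hΔ2 hmmem.2.2, hgr⟩, ?_⟩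
  intro k hjk hkm hkP
  obtain ⟨hk1, _, _, hdisj⟩ := hkP
  have hkmem := hconv k (by omega) hkm
  rcases hdisj with ⟨Δ', hΔ', hle⟩ | ⟨Δ', hΔ', hle⟩
  · have heq : Δ' = Δ1 := intervalS_unique h1 hΔ' hΔ1 hle.1.2 hkmem.1.2
    rw [heq] at hle
    have := hle.2 hjJ1
    omega
  · have heq : Δ' = Δ2 := intervalOE_unique h2 hΔ' hΔ2 hle.1.2 hkmem.2.2
    rw [heq] at hle
    have := hle.2 hjJ2
    omega

lemma DOWN (h1 : IsPartition f1 N1) (h1s : Symp f1) (h1sp : SpecialPairs f1)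
    (h2 : IsPartition f2 N2) (h2o : Orth f2) (h2sp : SpecialPairs f2)
    {j : ℕ} (hj1 : 1 ≤ j) (he : Even (f1 j)) (hodd : Odd (f2 j)) :
    ∃ m, m ≤ j ∧ m ∈ JplusSet f1 f2 ∧ ∀ k, m ≤ k → k < j → k ∉ JminusSet f1 f2 := by
  classical
  obtain ⟨Δ1, hΔ1, hv1⟩ := coverS h1 hj1 he
  obtain ⟨Δ2, hΔ2, hv2⟩ := coverOE h2 hj1 hodd
  obtain ⟨a1, b1, hba1, hchar1, _, _, _⟩ := intervalS_rep h1 hΔ1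
  obtain ⟨a2, b2, hba2, hb21, hchar2, _, _, _⟩ := intervalOE_rep h2 h2o h2sp hΔ2
  have hJ1 := jsetS_char h1 hchar1
  have hJ2 := jsetOE_char h2 hb21 hchar2
  have hjJ1 : j ∈ Jset f1 Δ1 := ⟨hj1, hv1⟩
  have hjJ2 : j ∈ Jset f2 Δ2 := ⟨hj1, hv2⟩
  set s1 := sInf (Jset f1 Δ1) with hs1
  set s2 := sInf (Jset f2 Δ2) with hs2
  have hs1mem : s1 ∈ Jset f1 Δ1 := Nat.sInf_mem ⟨j, hjJ1⟩
  have hs2mem : s2 ∈ Jset f2 Δ2 := Nat.sInf_mem ⟨j, hjJ2⟩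
  have hs1lb : ∀ k ∈ Jset f1 Δ1, s1 ≤ k := fun k hk => Nat.sInf_le hk
  have hs2lb : ∀ k ∈ Jset f2 Δ2, s2 ≤ k := fun k hk => Nat.sInf_le hk
  set m := max s1 s2 with hm
  have hmj : m ≤ j := max_le (hs1lb j hjJ1) (hs2lb j hjJ2)
  have hconv : ∀ k, m ≤ k → k ≤ j → k ∈ Jset f1 Δ1 ∧ k ∈ Jset f2 Δ2 := by
    intro k hmk hkj
    have hs1' := (hJ1 s1).mp hs1mem
    have hs2' := (hJ2 s2).mp hs2mem
    have hk1 : 1 ≤ k := le_trans hs1'.1 (le_trans (le_max_left s1 s2) hmk)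
    constructor
    · rw [hJ1]
      have hup := h1.mono hs1'.1 (le_trans (le_max_left s1 s2) hmk)
      have hdn := h1.mono hk1 hkj
      have hj' := (hJ1 j).mp hjJ1
      exact ⟨hk1, by omega, by omega⟩
    · rw [hJ2]
      have hup := h2.mono hs2'.1 (le_trans (le_max_right s1 s2) hmk)
      have hdn := h2.mono hk1 hkj
      have hj' := (hJ2 j).mp hjJ2
      exact ⟨hk1, by omega, by omega⟩
  have hmmem := hconv m le_rfl hmj
  have hm1 : 1 ≤ m := hmmem.1.1
  refine ⟨m, hmj, ⟨hm1, intervalS_even_val h1 h1s h1sp hΔ1 hmmem.1.2,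
    intervalOE_odd_val h2 h2o h2sp hΔ2 hmmem.2.2, ?_⟩, ?_⟩
  · rcases le_total s1 s2 with hle | hle
    · have : m = s2 := max_eq_right hle
      rw [this]
      exact Or.inr ⟨Δ2, hΔ2, hs2mem, hs2lb⟩
    · have : m = s1 := max_eq_left hle
      rw [this]
      exact Or.inl ⟨Δ1, hΔ1, hs1mem, hs1lb⟩
  · intro k hmk hkj hkM
    obtain ⟨hk1, _, _, hdisj⟩ := hkM
    have hkmem := hconv k hmk (by omega)
    rcases hdisj with ⟨Δ', hΔ', hgr⟩ | ⟨Δ', hΔ', hgr⟩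
    · have heq : Δ' = Δ1 := intervalS_unique h1 hΔ' hΔ1 hgr.1.2 hkmem.1.2
      rw [heq] at hgr
      have := hgr.2 hjJ1
      omega
    · have heq : Δ' = Δ2 := intervalOE_unique h2 hΔ' hΔ2 hgr.1.2 hkmem.2.2
      rw [heq] at hgr
      have := hgr.2 hjJ2
      omega

end UpDown
section Interleave

lemma interleave {A B : Set ℕ} (hAf : A.Finite) (hBf : B.Finite)
    (hdisj : ∀ x, x ∈ A → x ∈ B → False)
    (ha : ∀ b ∈ B, ∃ a ∈ A, a < b)
    (hd : ∀ a ∈ A, ∃ b ∈ B, a < b)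
    (hb : ∀ a ∈ A, ∀ a' ∈ A, a < a' → ∃ b ∈ B, a < b ∧ b < a')
    (hc : ∀ b ∈ B, ∀ b' ∈ B, b < b' → ∃ a ∈ A, b < a ∧ a < b') :
    ∃ (r : ℕ) (jp jm : Fin r → ℕ),
      A.ncard = r ∧ B.ncard = r ∧
      StrictMono jp ∧ StrictMono jm ∧
      Set.range jp = A ∧ Set.range jm = B ∧
      (∀ i, jp i < jm i) ∧
      (∀ (i : Fin r) (h : (i : ℕ) + 1 < r), jm i < jp ⟨(i : ℕ) + 1, h⟩) := by
  classical
  set As := hAf.toFinset with hAs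
  set Bs := hBf.toFinset with hBs
  set rA := As.card with hrA
  set rB := Bs.card with hrB
  set ea : Fin rA → ℕ := fun i => As.orderEmbOfFin rfl i with hea
  set eb : Fin rB → ℕ := fun i => Bs.orderEmbOfFin rfl i with heb
  have heaSM : StrictMono ea := (As.orderEmbOfFin rfl).strictMono
  have hebSM : StrictMono eb := (Bs.orderEmbOfFin rfl).strictMono
  have heamem : ∀ i, ea i ∈ A := fun i => hAf.mem_toFinset.mp (As.orderEmbOfFin_mem rfl i)
  have hebmem : ∀ i, eb i ∈ B := fun i => hBf.mem_toFinset.mp (Bs.orderEmbOfFin_mem rfl i)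
  have heaidx : ∀ a ∈ A, ∃ k : Fin rA, ea k = a := by
    intro a haA
    have : a ∈ Set.range ea := by
      rw [hea]
      rw [show (fun i => As.orderEmbOfFin rfl i) = ⇑(As.orderEmbOfFin rfl) from rfl]
      rw [Finset.range_orderEmbOfFin]
      exact hAf.mem_toFinset.mpr haA
    exact this
  have hebidx : ∀ b ∈ B, ∃ k : Fin rB, eb k = b := by
    intro b hbB
    have : b ∈ Set.range eb := by
      rw [heb]
      rw [show (fun i => Bs.orderEmbOfFin rfl i) = ⇑(Bs.orderEmbOfFin rfl) from rfl]
      rw [Finset.range_orderEmbOfFin]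
      exact hBf.mem_toFinset.mpr hbB
    exact this
  -- the key interleaving claims, by strong induction
  have Q : ∀ i : ℕ,
      (∀ (hi : i < rB), ∃ (hi' : i < rA), ea ⟨i, hi'⟩ < eb ⟨i, hi⟩) ∧
      (∀ (hi : i + 1 < rA), ∃ (hi' : i < rB), eb ⟨i, hi'⟩ < ea ⟨i+1, hi⟩) := by
    intro i
    induction i using Nat.strong_induction_on with
    | _ i IH =>
      constructor
      · intro hi
        rcases Nat.eq_zero_or_pos i with rfl | hipos
        · obtain ⟨a, haA, hab⟩ := ha _ (hebmem ⟨0, hi⟩)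
          obtain ⟨k, hk⟩ := heaidx a haA
          have h0A : 0 < rA := lt_of_le_of_lt (Nat.zero_le k.1) k.2
          refine ⟨h0A, ?_⟩
          have : ea ⟨0, h0A⟩ ≤ ea k := heaSM.monotone (by simp [Fin.le_def])
          omega
        · obtain ⟨i', rfl⟩ : ∃ i', i = i' + 1 := ⟨i - 1, by omega⟩
          have hi'B : i' < rB := by omega
          obtain ⟨hi'A, hlt'⟩ := (IH i' (by omega)).1 hi'B
          have hbb : eb ⟨i', hi'B⟩ < eb ⟨i'+1, hi⟩ := hebSM (by simp [Fin.lt_def])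
          obtain ⟨a, haA, hab1, hab2⟩ := hc _ (hebmem ⟨i', hi'B⟩) _ (hebmem ⟨i'+1, hi⟩) hbb
          obtain ⟨k, hk⟩ := heaidx a haA
          have hik : ea ⟨i', hi'A⟩ < ea k := by omega
          have hik' : i' < k.1 := by
            have := heaSM.lt_iff_lt.mp hik
            simpa [Fin.lt_def] using this
          have hi1A : i' + 1 < rA := lt_of_le_of_lt hik' k.2
          refine ⟨hi1A, ?_⟩
          have : ea ⟨i'+1, hi1A⟩ ≤ ea k := heaSM.monotone (by simp only [Fin.le_def]; omega)
          omega
      · intro hi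
        have hiA : i < rA := by omega
        have haa : ea ⟨i, hiA⟩ < ea ⟨i+1, hi⟩ := heaSM (by simp [Fin.lt_def])
        obtain ⟨b, hbB, hab1, hab2⟩ := hb _ (heamem ⟨i, hiA⟩) _ (heamem ⟨i+1, hi⟩) haa
        obtain ⟨k, hk⟩ := hebidx b hbB
        rcases le_or_gt i k.1 with hik | hik
        · have hiB : i < rB := lt_of_le_of_lt hik k.2
          refine ⟨hiB, ?_⟩
          have : eb ⟨i, hiB⟩ ≤ eb k := hebSM.monotone (by simp only [Fin.le_def]; omega)
          omega
        · exfalso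
          have hk1A : k.1 + 1 < rA := by omega
          obtain ⟨hkB, hlt'⟩ := (IH k.1 (by omega)).2 hk1A
          have hkk : eb ⟨k.1, hkB⟩ = eb k := by congr 1
          have : ea ⟨k.1+1, hk1A⟩ ≤ ea ⟨i, hiA⟩ := heaSM.monotone (by simp only [Fin.le_def]; omega)
          omega
  -- equal cardinalities
  have hrBA : rB ≤ rA := by
    by_contra hcon
    obtain ⟨h', _⟩ := (Q rA).1 (by omega)
    omega
  have hrAB : rA ≤ rB := by
    by_contra hcon
    have hrApos : 1 ≤ rA := by omega
    have hlast : rA - 1 < rA := by omega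
    obtain ⟨b, hbB, hab⟩ := hd _ (heamem ⟨rA - 1, hlast⟩)
    obtain ⟨k, hk⟩ := hebidx b hbB
    have hk1A : k.1 + 1 < rA := by
      have := k.2
      omega
    obtain ⟨hkB, hlt'⟩ := (Q k.1).2 hk1A
    have hkk : eb ⟨k.1, hkB⟩ = eb k := by congr 1
    have : ea ⟨k.1+1, hk1A⟩ ≤ ea ⟨rA-1, hlast⟩ := by
      apply heaSM.monotone
      simp only [Fin.le_def]
      have := k.2
      omega
    omega
  have hr : rB = rA := le_antisymm hrBA hrAB
  refine ⟨rA, ea, (fun i => eb ⟨i.1, by rw [hr]; exact i.2⟩), ?_, ?_, heaSM, ?_, ?_, ?_, ?_, ?_⟩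
  · rw [Set.ncard_eq_toFinset_card A hAf]
  · rw [Set.ncard_eq_toFinset_card B hBf, ← hrB, hr]
  · intro x y hxy
    apply hebSM
    simp only [Fin.lt_def]
    exact hxy
  · ext y
    constructor
    · rintro ⟨k, rfl⟩
      exact heamem k
    · intro hy
      obtain ⟨k, hk⟩ := heaidx y hy
      exact ⟨k, hk⟩
  · ext y
    constructor
    · rintro ⟨k, rfl⟩
      exact hebmem _
    · intro hy
      obtain ⟨k, hk⟩ := hebidx y hy
      refine ⟨⟨k.1, by omega⟩, ?_⟩
      rw [← hk]
  · intro i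
    have hiB : (i : ℕ) < rB := by rw [hr]; exact i.2
    obtain ⟨hi', hlt⟩ := (Q i.1).1 hiB
    have h1 : ea ⟨i.1, hi'⟩ = ea i := by congr 1
    have h2 : (fun j : Fin rA => eb ⟨j.1, by rw [hr]; exact j.2⟩) i = eb ⟨i.1, hiB⟩ := rfl
    omega
  · intro i h
    obtain ⟨hi', hlt⟩ := (Q i.1).2 h
    have h2 : (fun j : Fin rA => eb ⟨j.1, by rw [hr]; exact j.2⟩) i = eb ⟨i.1, hi'⟩ := rfl
    omega

end Interleave

/-- Section 1.9: `J^+` consists of odd indices, `J^-` of even indices, they are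
finite of the same cardinality `r`, and they interleave as
`j_1^+ < j_1^- < j_2^+ < j_2^- < … < j_r^+ < j_r^-`. -/
theorem stmt6 (n1 n2 : ℕ)
    (f1 : ℕ → ℕ) (h1 : IsPartition f1 (2*n1)) (h1s : Symp f1) (h1sp : SpecialPairs f1)
    (f2 : ℕ → ℕ) (h2 : IsPartition f2 (2*n2)) (h2o : Orth f2) (h2sp : SpecialPairs f2) :
    (∀ j ∈ JplusSet f1 f2, Odd j) ∧
    (∀ j ∈ JminusSet f1 f2, Even j) ∧
    (JplusSet f1 f2).Finite ∧ (JminusSet f1 f2).Finite ∧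
    ∃ (r : ℕ) (jp jm : Fin r → ℕ),
      (JplusSet f1 f2).ncard = r ∧ (JminusSet f1 f2).ncard = r ∧
      StrictMono jp ∧ StrictMono jm ∧
      Set.range jp = JplusSet f1 f2 ∧ Set.range jm = JminusSet f1 f2 ∧
      (∀ i : Fin r, jp i < jm i) ∧
      (∀ (i : Fin r) (h : (i : ℕ) + 1 < r), jm i < jp ⟨(i : ℕ) + 1, h⟩) := by
  have hplus_odd : ∀ j ∈ JplusSet f1 f2, Odd j := by
    rintro j ⟨hj1, _, _, hd⟩
    rcases hd with ⟨Δ, hΔ, hle⟩ | ⟨Δ, hΔ, hle⟩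
    · exact PM1S h1 hΔ hle
    · exact PM1OE h2 h2o h2sp hΔ hle
  have hminus_even : ∀ j ∈ JminusSet f1 f2, Even j := by
    rintro j ⟨hj1, _, _, hd⟩
    rcases hd with ⟨Δ, hΔ, hgr⟩ | ⟨Δ, hΔ, hgr⟩
    · exact PM2S h1 hΔ hgr
    · exact PM2OE h2 h2o h2sp hΔ hgr
  obtain ⟨M2, hM2⟩ := h2.fin
  have hbound : ∀ (j : ℕ), Odd (f2 j) → j ≤ M2 := by
    intro j hj
    by_contra hc
    have := hM2 j (by omega)
    rw [this] at hj
    exact (Nat.not_odd_iff_even.mpr Even.zero) hj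
  have hplus_fin : (JplusSet f1 f2).Finite := by
    apply Set.Finite.subset (Set.finite_Icc 1 M2)
    rintro j ⟨hj1, _, hodd, _⟩
    exact Set.mem_Icc.mpr ⟨hj1, hbound j hodd⟩
  have hminus_fin : (JminusSet f1 f2).Finite := by
    apply Set.Finite.subset (Set.finite_Icc 1 M2)
    rintro j ⟨hj1, _, hodd, _⟩
    exact Set.mem_Icc.mpr ⟨hj1, hbound j hodd⟩
  have hABne : ∀ x, x ∈ JplusSet f1 f2 → x ∈ JminusSet f1 f2 → False := by
    intro x hA hB
    have hx1 := hplus_odd x hA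
    have hx2 := hminus_even x hB
    rw [Nat.odd_iff] at hx1
    rw [Nat.even_iff] at hx2
    omega
  refine ⟨hplus_odd, hminus_even, hplus_fin, hminus_fin, ?_⟩
  apply interleave hplus_fin hminus_fin hABne
  · -- every element of J^- has an element of J^+ below it
    intro b hbB
    obtain ⟨hb1, he, ho, _⟩ := id hbB
    obtain ⟨m, hmb, hmA, _⟩ := DOWN h1 h1s h1sp h2 h2o h2sp hb1 he ho
    refine ⟨m, hmA, ?_⟩
    rcases eq_or_lt_of_le hmb with h | h
    · exact absurd (h ▸ hbB) (fun hc => hABne m hmA hc)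
    · exact h
  · -- every element of J^+ has an element of J^- above it
    intro a haA
    obtain ⟨ha1, he, ho, _⟩ := id haA
    obtain ⟨m, ham, hmB, _⟩ := UP h1 h1s h1sp h2 h2o h2sp ha1 he ho
    refine ⟨m, hmB, ?_⟩
    rcases eq_or_lt_of_le ham with h | h
    · exact absurd (h ▸ hmB) (fun hc => hABne a haA hc)
    · exact h
  · -- between two elements of J^+ there is an element of J^-
    intro a haA a' haA' haa
    obtain ⟨ha1, he, ho, _⟩ := id haA
    obtain ⟨m, ham, hmB, hnoplus⟩ := UP h1 h1s h1sp h2 h2o h2sp ha1 he ho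
    have ham' : a < m := by
      rcases eq_or_lt_of_le ham with h | h
      · exact absurd (h ▸ hmB) (fun hc => hABne a haA hc)
      · exact h
    refine ⟨m, hmB, ham', ?_⟩
    by_contra hc
    exact hnoplus a' haa (by omega) haA'
  · -- between two elements of J^- there is an element of J^+
    intro b hbB b' hbB' hbb
    obtain ⟨hb1, he, ho, _⟩ := id hbB'
    obtain ⟨m, hmb, hmA, hnominus⟩ := DOWN h1 h1s h1sp h2 h2o h2sp hb1 he ho
    have hmb' : m < b' := by
      rcases eq_or_lt_of_le hmb with h | h
      · exact absurd (h ▸ hbB') (fun hc => hABne m hmA hc)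
      · exact h
    refine ⟨m, hmA, ?_, hmb'⟩
    by_contra hc
    exact hnominus b (by omega) hbb hbB

end Wald
end
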